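/- arXiv:math/0605067 — 5 statements merged into one kernel-verified Lean document; each statement's English description precedes it below -/
import Mathlib

section
/- For every p ∈ Q⁰_λ and every A ⊆ λ, there exists q ∈ Q⁰_λ with p ≤⁰ q such that either A ∈ fil(q) or λ ∖ A ∈ fil(q). -/
open Set

noncomputable section

def IsUltrafilterOn {α : Type*} (Z : Set α) (d : Set (Set α)) : Prop :=
  (∀ A ∈ d, A ⊆ Z) ∧ Z ∈ d ∧ ∅ ∉ d ∧
  (∀ A B : Set α, A ∈ d → A ⊆ B → B ⊆ Z → B ∈ d) ∧
  (∀ A B : Set α, A ∈ d → B ∈ d → A ∩ B ∈ d) ∧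
  (∀ A : Set α, A ⊆ Z → (A ∈ d ∨ Z \ A ∈ d))

def IsNonprincipalOn {α : Type*} (Z : Set α) (d : Set (Set α)) : Prop :=
  IsUltrafilterOn Z d ∧ ∀ x : α, {x} ∉ d

def IsClubIn (C : Set Ordinal) (lam : Ordinal) : Prop :=
  C ⊆ Iio lam ∧ (∀ β < lam, ∃ δ ∈ C, β < δ) ∧
  (∀ β < lam, β ≠ 0 → sSup (C ∩ Iio β) = β → β ∈ C)

def nextIn (C : Set Ordinal) (δ : Ordinal) : Ordinal := sInf (C \ Iic δ)

/-- An element of `Q⁰_λ`: a club `C` of limit ordinals below `λ`, together with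
a non-principal ultrafilter `d δ` on the interval `Z_δ = [δ, min(C ∖ (δ+1)))` for each `δ ∈ C`. -/
structure QZero (lam : Ordinal) where
  C : Set Ordinal
  d : Ordinal → Set (Set Ordinal)
  club : IsClubIn C lam
  limit : ∀ δ ∈ C, Order.IsSuccLimit δ
  ultra : ∀ δ ∈ C, IsNonprincipalOn (Ico δ (nextIn C δ)) (d δ)

def QZero.Z {lam : Ordinal} (p : QZero lam) (δ : Ordinal) : Set Ordinal :=
  Ico δ (nextIn p.C δ)

def fil {lam : Ordinal} (p : QZero lam) : Set (Set Ordinal) :=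
  {A | A ⊆ Iio lam ∧ ∃ ε < lam, ∀ δ ∈ p.C, ε ≤ δ → A ∩ p.Z δ ∈ p.d δ}

def le0 {lam : Ordinal} (p q : QZero lam) : Prop := fil p ⊆ fil q

def filG {lam : Ordinal} (G : Set (QZero lam)) : Set (Set Ordinal) :=
  ⋃ p ∈ G, fil p

lemma sup_reach {S : Set Ordinal} {β γ : Ordinal} (h : sSup (S ∩ Iio β) = β) (hγ : γ < β) :
    ∃ s, s ∈ S ∧ γ < s ∧ s < β := by
  by_contra hc
  push_neg at hc
  have hub : ∀ s ∈ S ∩ Iio β, s ≤ γ := by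
    intro s hs
    by_contra hgs
    exact absurd hs.2 (not_lt.2 (hc s hs.1 (not_le.1 hgs)))
  exact absurd (h ▸ csSup_le' hub) (not_le.2 hγ)

lemma nextIn_spec {C : Set Ordinal} {δ : Ordinal} (h : ∃ γ ∈ C, δ < γ) :
    nextIn C δ ∈ C ∧ δ < nextIn C δ := by
  obtain ⟨γ, hγC, hγ⟩ := h
  have hne : (C \ Iic δ).Nonempty := ⟨γ, hγC, not_le.2 hγ⟩
  have := csInf_mem hne
  exact ⟨this.1, not_le.1 this.2⟩

lemma nextIn_le {C : Set Ordinal} {δ γ : Ordinal} (hγC : γ ∈ C) (hγ : δ < γ) :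
    nextIn C δ ≤ γ := csInf_le (OrderBot.bddBelow _) ⟨hγC, not_le.2 hγ⟩

lemma key (κ : Cardinal) (hreg : κ.IsRegular) (hunc : Cardinal.aleph0 < κ)
    (p : QZero κ.ord) (S : Set Ordinal) (hS : S ⊆ p.C)
    (hub : ∀ β < κ.ord, ∃ δ ∈ S, β < δ)
    (B : Set Ordinal) (hB : B ⊆ Iio κ.ord)
    (hBS : ∀ δ ∈ S, B ∩ p.Z δ ∈ p.d δ) :
    ∃ q : QZero κ.ord, le0 p q ∧ B ∈ fil q := by
  have hl0 : (0 : Ordinal) < κ.ord := by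
    rw [Cardinal.lt_ord]
    simpa using hreg.pos
  have hSlt : ∀ s ∈ S, s < κ.ord := fun s hs => p.club.1 (hS hs)
  -- the "next element of S" function
  set next : Ordinal → Ordinal := fun γ => sInf (S \ Iic γ) with hnextdef
  have step : ∀ γ < κ.ord, next γ ∈ S ∧ γ < next γ := by
    intro γ hγ
    obtain ⟨δ, hδS, hδ⟩ := hub γ hγ
    have hne : (S \ Iic γ).Nonempty := ⟨δ, hδS, not_le.2 hδ⟩
    have := csInf_mem hne
    exact ⟨this.1, not_le.1 this.2⟩
  -- C' : limit points of S
  set C' : Set Ordinal := {β | β < κ.ord ∧ β ≠ 0 ∧ sSup (S ∩ Iio β) = β} with hC'def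
  have hC'C : C' ⊆ p.C := by
    intro β hβ
    obtain ⟨hβκ, hβ0, hβsup⟩ := hβ
    apply p.club.2.2 β hβκ hβ0
    obtain ⟨s, hsS, _, hsβ⟩ := sup_reach hβsup (pos_iff_ne_zero.2 hβ0)
    apply le_antisymm (csSup_le' fun x hx => hx.2.le)
    calc β = sSup (S ∩ Iio β) := hβsup.symm
      _ ≤ sSup (p.C ∩ Iio β) := csSup_le_csSup ⟨β, fun x hx => hx.2.le⟩ ⟨s, hsS, hsβ⟩
          (fun x hx => ⟨hS hx.1, hx.2⟩)
  have hC'ub : ∀ β < κ.ord, ∃ δ ∈ C', β < δ := by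
    intro β hβ
    set f : ℕ → Ordinal := fun n => Nat.rec (next β) (fun _ ih => next ih) n with hfdef
    have hf : ∀ n, f n ∈ S ∧ f n < κ.ord := by
      intro n
      induction n with
      | zero => exact ⟨(step β hβ).1, hSlt _ (step β hβ).1⟩
      | succ n ih => exact ⟨(step (f n) ih.2).1, hSlt _ (step (f n) ih.2).1⟩
    have hmono : ∀ n, f n < f (n + 1) := fun n => (step (f n) (hf n).2).2
    set δ := ⨆ n, f n with hδdef
    have hδκ : δ < κ.ord := by
      apply Ordinal.iSup_lt_ord_lift _ (fun n => (hf n).2)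
      rwa [Cardinal.mk_nat, Cardinal.lift_aleph0, hreg.cof_eq]
    have hle : ∀ n, f n ≤ δ := fun n => le_ciSup (Ordinal.bddAbove_range f) n
    have hlt : ∀ n, f n < δ := fun n => lt_of_lt_of_le (hmono n) (hle (n + 1))
    have hβδ : β < δ := lt_of_lt_of_le (step β hβ).2 (hle 0)
    refine ⟨δ, ⟨hδκ, ?_, ?_⟩, hβδ⟩
    · exact (lt_of_le_of_lt (zero_le (a := β)) hβδ).ne'
    · apply le_antisymm (csSup_le' fun x hx => hx.2.le)
      refine ciSup_le fun n => le_csSup ⟨δ, fun x hx => hx.2.le⟩ ⟨(hf n).1, hlt n⟩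
  -- properties of next at points of C'
  have hnext : ∀ δ' ∈ C', next δ' ∈ S ∧ δ' < next δ' ∧ next δ' < nextIn C' δ' ∧
      p.Z (next δ') ⊆ Ico δ' (nextIn C' δ') := by
    intro δ' hδ'
    have hδ'κ : δ' < κ.ord := hδ'.1
    obtain ⟨hnS, hδn⟩ := step δ' hδ'κ
    obtain ⟨hγ'C', hδγ'⟩ := nextIn_spec (hC'ub δ' hδ'κ)
    set γ' := nextIn C' δ'
    obtain ⟨s, hsS, hδs, hsγ'⟩ := sup_reach hγ'C'.2.2 hδγ'
    have hnγ' : next δ' < γ' :=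
      lt_of_le_of_lt (csInf_le (OrderBot.bddBelow _) ⟨hsS, not_le.2 hδs⟩) hsγ'
    refine ⟨hnS, hδn, hnγ', ?_⟩
    intro x hx
    refine ⟨le_trans hδn.le hx.1, lt_of_lt_of_le hx.2 ?_⟩
    exact nextIn_le (hC'C hγ'C') hnγ'
  -- the new ultrafilters
  set d' : Ordinal → Set (Set Ordinal) :=
    fun δ => {X | X ⊆ Ico δ (nextIn C' δ) ∧ X ∩ p.Z (next δ) ∈ p.d (next δ)} with hd'def
  have hclub : IsClubIn C' κ.ord := by
    refine ⟨fun β hβ => hβ.1, hC'ub, ?_⟩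
    intro β hβκ hβ0 hβsup
    refine ⟨hβκ, hβ0, le_antisymm (csSup_le' fun x hx => hx.2.le) ?_⟩
    by_contra h
    push_neg at h
    obtain ⟨δ', hδ'C', hσδ', hδ'β⟩ := sup_reach hβsup h
    obtain ⟨s, hsS, hσs, hsδ'⟩ := sup_reach hδ'C'.2.2 hσδ'
    have : s ≤ sSup (S ∩ Iio β) :=
      le_csSup ⟨β, fun x hx => hx.2.le⟩ ⟨hsS, hsδ'.trans hδ'β⟩
    exact absurd (lt_of_lt_of_le hσs this) (lt_irrefl _)
  have hultra : ∀ δ ∈ C', IsNonprincipalOn (Ico δ (nextIn C' δ)) (d' δ) := by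
    intro δ' hδ'
    obtain ⟨hζS, hδζ, hζγ, hZw⟩ := hnext δ' hδ'
    have hζC : next δ' ∈ p.C := hS hζS
    obtain ⟨⟨hd1, hd2, hd3, hd4, hd5, hd6⟩, hnp⟩ := p.ultra (next δ') hζC
    refine ⟨⟨fun X hX => hX.1, ?_, ?_, ?_, ?_, ?_⟩, ?_⟩
    · refine ⟨subset_rfl, ?_⟩
      rw [inter_eq_self_of_subset_right hZw]
      exact hd2
    · intro h
      exact hd3 (by simpa using h.2)
    · intro X Y hX hXY hY
      exact ⟨hY, hd4 _ _ hX.2 (inter_subset_inter_left _ hXY) inter_subset_right⟩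
    · intro X Y hX hY
      refine ⟨fun x hx => hX.1 hx.1, ?_⟩
      have heq : (X ∩ Y) ∩ p.Z (next δ') = (X ∩ p.Z (next δ')) ∩ (Y ∩ p.Z (next δ')) := by
        ext x; simp only [mem_inter_iff]; tauto
      rw [heq]
      exact hd5 _ _ hX.2 hY.2
    · intro X hXsub
      rcases hd6 (X ∩ p.Z (next δ')) inter_subset_right with h | h
      · exact Or.inl ⟨hXsub, h⟩
      · refine Or.inr ⟨diff_subset, ?_⟩
        have heq : (Ico δ' (nextIn C' δ') \ X) ∩ p.Z (next δ') =
            Ico (next δ') (nextIn p.C (next δ')) \ (X ∩ p.Z (next δ')) := by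
          ext y
          constructor
          · rintro ⟨⟨_, hy⟩, hz⟩; exact ⟨hz, fun hc => hy hc.1⟩
          · rintro ⟨hz, hy⟩; exact ⟨⟨hZw hz, fun hc => hy ⟨hc, hz⟩⟩, hz⟩
        rw [heq]
        exact h
    · intro x hx
      have h2 := hx.2
      rcases subset_singleton_iff_eq.1
          (inter_subset_left : {x} ∩ p.Z (next δ') ⊆ {x}) with he | he
      · rw [he] at h2; exact hd3 h2
      · rw [he] at h2; exact hnp x h2
  set q : QZero κ.ord := ⟨C', d', hclub, fun δ hδ => p.limit δ (hC'C hδ), hultra⟩ with hqdef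
  have hqZ : ∀ δ, q.Z δ = Ico δ (nextIn C' δ) := fun δ => rfl
  have hkey : ∀ (X : Set Ordinal) (δ' : Ordinal), δ' ∈ C' →
      (X ∩ q.Z δ') ∩ p.Z (next δ') = X ∩ p.Z (next δ') := by
    intro X δ' hδ'
    rw [hqZ, inter_assoc, inter_eq_self_of_subset_right (hnext δ' hδ').2.2.2]
  refine ⟨q, ?_, ?_⟩
  · intro X hX
    obtain ⟨hXsub, ε, hε, hXd⟩ := hX
    refine ⟨hXsub, ε, hε, ?_⟩
    intro δ' hδ' hεδ'
    obtain ⟨hζS, hδζ, _, _⟩ := hnext δ' hδ'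
    refine ⟨inter_subset_right, ?_⟩
    rw [show (X ∩ q.Z δ') ∩ p.Z (next δ') = X ∩ p.Z (next δ') from hkey X δ' hδ']
    exact hXd (next δ') (hS hζS) (hεδ'.trans hδζ.le)
  · refine ⟨hB, 0, hl0, ?_⟩
    intro δ' hδ' _
    refine ⟨inter_subset_right, ?_⟩
    rw [show (B ∩ q.Z δ') ∩ p.Z (next δ') = B ∩ p.Z (next δ') from hkey B δ' hδ']
    exact hBS (next δ') (hnext δ' hδ').1

/-- For every `p ∈ Q⁰_λ` and `A ⊆ λ` there is `q ∈ Q⁰_λ` with `p ≤⁰ q` such that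
either `A ∈ fil(q)` or `λ ∖ A ∈ fil(q)`. -/
theorem statement2 (κ : Cardinal) (hreg : κ.IsRegular) (hunc : Cardinal.aleph0 < κ)
    (p : QZero κ.ord) (A : Set Ordinal) (hA : A ⊆ Iio κ.ord) :
    ∃ q : QZero κ.ord, le0 p q ∧ (A ∈ fil q ∨ (Iio κ.ord \ A) ∈ fil q) := by
  set S : Set Ordinal := {δ | δ ∈ p.C ∧ A ∩ p.Z δ ∈ p.d δ} with hSdef
  by_cases hu : ∀ β < κ.ord, ∃ δ ∈ S, β < δ
  · obtain ⟨q, h1, h2⟩ := key κ hreg hunc p S (fun δ hδ => hδ.1) hu A hA (fun δ hδ => hδ.2)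
    exact ⟨q, h1, Or.inl h2⟩
  · push_neg at hu
    obtain ⟨β, hβ, hbd⟩ := hu
    set T : Set Ordinal := {δ | δ ∈ p.C ∧ β < δ} with hTdef
    have hTub : ∀ γ < κ.ord, ∃ δ ∈ T, γ < δ := by
      intro γ hγ
      obtain ⟨δ, hδC, hδ⟩ := p.club.2.1 (max β γ) (max_lt hβ hγ)
      exact ⟨δ, ⟨hδC, (le_max_left _ _).trans_lt hδ⟩, (le_max_right _ _).trans_lt hδ⟩
    have hBS : ∀ δ ∈ T, (Iio κ.ord \ A) ∩ p.Z δ ∈ p.d δ := by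
      intro δ hδ
      obtain ⟨hδC, hβδ⟩ := hδ
      obtain ⟨⟨hd1, hd2, hd3, hd4, hd5, hd6⟩, hnp⟩ := p.ultra δ hδC
      rcases hd6 (A ∩ p.Z δ) inter_subset_right with h | h
      · exact absurd (hbd δ ⟨hδC, h⟩) (not_le.2 hβδ)
      · have hZsub : p.Z δ ⊆ Iio κ.ord := by
          intro x hx
          have hnx := nextIn_spec (p.club.2.1 δ (p.club.1 hδC))
          exact hx.2.trans (p.club.1 hnx.1)
        have heq : (Iio κ.ord \ A) ∩ p.Z δ = Ico δ (nextIn p.C δ) \ (A ∩ p.Z δ) := by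
          ext y
          constructor
          · rintro ⟨⟨_, hy⟩, hz⟩; exact ⟨hz, fun hc => hy hc.1⟩
          · rintro ⟨hz, hy⟩; exact ⟨⟨hZsub hz, fun hc => hy ⟨hc, hz⟩⟩, hz⟩
        rw [heq]
        exact h
    obtain ⟨q, h1, h2⟩ := key κ hreg hunc p T (fun δ hδ => hδ.1) hTub _ diff_subset hBS
    exact ⟨q, h1, Or.inr h2⟩
end
end

section
/- If G* ⊆ Q⁰_λ is directed with respect to ≤⁰ and |G*| ≤ λ, then G* has a ≤⁰-upper bound in Q⁰_λ; consequently, fil(G*) is not an ultrafilter on λ. -/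
open Set

noncomputable section

section ClubBasics

variable {lam : Ordinal} {C : Set Ordinal}

lemma next_nonempty (hC : IsClubIn C lam) {x : Ordinal} (hx : x < lam) :
    (C \ Iic x).Nonempty := by
  obtain ⟨δ, hδC, hδ⟩ := hC.2.1 x hx
  exact ⟨δ, hδC, not_le.2 hδ⟩

lemma lt_nextIn (hC : IsClubIn C lam) {x : Ordinal} (hx : x < lam) : x < nextIn C x := by
  have := csInf_mem (next_nonempty hC hx)
  exact not_le.1 this.2

lemma nextIn_mem (hC : IsClubIn C lam) {x : Ordinal} (hx : x < lam) : nextIn C x ∈ C :=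
  (csInf_mem (next_nonempty hC hx)).1

lemma nextIn_lt (hC : IsClubIn C lam) {x : Ordinal} (hx : x < lam) : nextIn C x < lam :=
  hC.1 (nextIn_mem hC hx)

lemma nextIn_le_of_mem {x β : Ordinal} (hβ : β ∈ C) (h : x < β) : nextIn C x ≤ β :=
  csInf_le (OrderBot.bddBelow _) ⟨hβ, not_le.2 h⟩

lemma nextIn_mono (hC : IsClubIn C lam) {x y : Ordinal} (hxy : x ≤ y) (hy : y < lam) :
    nextIn C x ≤ nextIn C y :=
  le_csInf (next_nonempty hC hy) fun b hb =>
    csInf_le (OrderBot.bddBelow _) ⟨hb.1, fun hbx => hb.2 (hbx.trans hxy)⟩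

/-- blocks are pairwise disjoint -/
lemma block_disjoint {β β' : Ordinal} (hβ : β ∈ C) (hβ' : β' ∈ C) (hne : β ≠ β')
    {x : Ordinal} (h1 : x ∈ Ico β (nextIn C β)) (h2 : x ∈ Ico β' (nextIn C β')) : False := by
  rcases hne.lt_or_gt with h | h
  · exact absurd (h1.2.trans_le ((nextIn_le_of_mem hβ' h).trans h2.1)) (lt_irrefl x)
  · exact absurd (h2.2.trans_le ((nextIn_le_of_mem hβ h).trans h1.1)) (lt_irrefl x)

/-- the block containing x -/
def blockOf (C : Set Ordinal) (x : Ordinal) : Ordinal := sSup (C ∩ Iic x)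

lemma blockOf_spec (hC : IsClubIn C lam) (h0 : 0 ∉ C) {x : Ordinal} (hx : x < lam)
    {m : Ordinal} (hm : m ∈ C) (hmx : m ≤ x) :
    blockOf C x ∈ C ∧ blockOf C x ≤ x ∧ x < nextIn C (blockOf C x) := by
  have hne : (C ∩ Iic x).Nonempty := ⟨m, hm, hmx⟩
  have hbdd : BddAbove (C ∩ Iic x) := ⟨x, fun y hy => hy.2⟩
  have hble : blockOf C x ≤ x := csSup_le hne fun y hy => hy.2
  have hbC : blockOf C x ∈ C := by
    by_cases hmem : blockOf C x ∈ C
    · exact hmem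
    · have hlt : blockOf C x < lam := hble.trans_lt hx
      have hb0 : blockOf C x ≠ 0 := by
        intro h
        have : m ≤ blockOf C x := le_csSup hbdd ⟨hm, hmx⟩
        rw [h, nonpos_iff_eq_zero] at this
        exact h0 (this ▸ hm)
      refine hC.2.2 _ hlt hb0 ?_
      have hset : C ∩ Iio (blockOf C x) = C ∩ Iic x := by
        ext y
        constructor
        · rintro ⟨hyC, hy⟩; exact ⟨hyC, hy.le.trans hble⟩
        · rintro ⟨hyC, hy⟩
          refine ⟨hyC, lt_of_le_of_ne (le_csSup hbdd ⟨hyC, hy⟩) ?_⟩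
          rintro rfl; exact hmem hyC
      rw [hset]
      rfl
  refine ⟨hbC, hble, ?_⟩
  by_contra h
  push_neg at h
  have : nextIn C (blockOf C x) ∈ C ∩ Iic x := ⟨nextIn_mem hC (hble.trans_lt hx), h⟩
  have h2 := le_csSup hbdd this
  exact absurd (lt_nextIn hC (hble.trans_lt hx)) (not_lt.2 h2)

end ClubBasics

section Reg

variable {κ : Cardinal.{0}}

lemma iSup_toType_lt (hreg : κ.IsRegular) {o : Ordinal} (ho : o < κ.ord)
    (f : o.ToType → Ordinal) (hf : ∀ i, f i < κ.ord) : (⨆ i, f i) < κ.ord :=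
  Ordinal.iSup_lt_ord (by rw [hreg.cof_eq, Cardinal.mk_toType]; exact Cardinal.lt_ord.1 ho) hf

lemma iSup_nat_lt (hreg : κ.IsRegular) (hunc : Cardinal.aleph0 < κ)
    (f : ℕ → Ordinal) (hf : ∀ i, f i < κ.ord) : (⨆ i, f i) < κ.ord :=
  Ordinal.iSup_lt_ord (by rw [hreg.cof_eq, Cardinal.mk_nat]; exact hunc) hf

def clubFrom (lam : Ordinal) (g : Ordinal → Ordinal) : Set Ordinal :=
  {δ | δ < lam ∧ 0 < δ ∧ ∀ α < δ, g α < δ}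

def iterFun (g : Ordinal → Ordinal) (x : Ordinal) : Ordinal :=
  max (x + 1) ((⨆ i : x.ToType, g ((Ordinal.ToType.mk (o := x)).symm i : Ordinal)) + 1)

lemma lt_iterFun (g : Ordinal → Ordinal) (x : Ordinal) : x < iterFun g x :=
  lt_of_lt_of_le (Order.lt_succ x) (le_max_left _ _)

lemma iterFun_lt (hreg : κ.IsRegular) {g : Ordinal → Ordinal}
    (hg : ∀ α < κ.ord, g α < κ.ord) {x : Ordinal} (hx : x < κ.ord) :
    iterFun g x < κ.ord := by
  have hlim := Cardinal.isSuccLimit_ord hreg.aleph0_le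
  apply max_lt (hlim.succ_lt hx)
  apply hlim.succ_lt
  exact iSup_toType_lt hreg hx _ fun i => hg _ (((Ordinal.ToType.mk (o := x)).symm i).2.trans hx)

lemma apply_lt_iterFun (g : Ordinal → Ordinal) {α x : Ordinal} (h : α < x) :
    g α < iterFun g x := by
  have : g α ≤ ⨆ i : x.ToType, g ((Ordinal.ToType.mk (o := x)).symm i : Ordinal) := by
    have := le_ciSup (Ordinal.bddAbove_range
      (fun i : x.ToType => g ((Ordinal.ToType.mk (o := x)).symm i : Ordinal)))
      (Ordinal.ToType.mk (o := x) ⟨α, h⟩)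
    simpa using this
  exact lt_of_lt_of_le (lt_of_le_of_lt this (Order.lt_succ _)) (le_max_right _ _)

lemma clubFrom_isClub (hreg : κ.IsRegular) (hunc : Cardinal.aleph0 < κ)
    {g : Ordinal → Ordinal} (hg : ∀ α < κ.ord, g α < κ.ord) :
    IsClubIn (clubFrom κ.ord g) κ.ord := by
  refine ⟨fun δ h => h.1, ?_, ?_⟩
  · intro β hβ
    set a : ℕ → Ordinal := fun n => (iterFun g)^[n] (β + 1) with ha
    have hmono : ∀ n, a n < a (n + 1) := by
      intro n
      rw [ha]; simp only [Function.iterate_succ_apply']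
      exact lt_iterFun g _
    have halt : ∀ n, a n < κ.ord := by
      intro n
      induction n with
      | zero => exact (Cardinal.isSuccLimit_ord hreg.aleph0_le).succ_lt hβ
      | succ n ih => rw [ha]; simp only [Function.iterate_succ_apply']; exact iterFun_lt hreg hg ih
    have hbdd := Ordinal.bddAbove_range a
    set δ := ⨆ n, a n with hδ
    have hlt : δ < κ.ord := iSup_nat_lt hreg hunc a halt
    have hle : ∀ n, a n ≤ δ := fun n => le_ciSup hbdd n
    refine ⟨δ, ⟨hlt, ?_, ?_⟩, ?_⟩
    · exact lt_of_lt_of_le (pos_iff_ne_zero.2 (Order.succ_ne_bot β)) (hle 0)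
    · intro α hα
      have : ∃ n, α < a n := by
        by_contra h
        push_neg at h
        exact absurd (ciSup_le h) (not_le.2 hα)
      obtain ⟨n, hn⟩ := this
      calc g α < iterFun g (a n) := apply_lt_iterFun g hn
        _ = a (n + 1) := by rw [ha]; simp [Function.iterate_succ_apply']
        _ ≤ δ := hle (n + 1)
    · exact lt_of_lt_of_le (Order.lt_succ β) (hle 0)
  · intro β hβ hβ0 hsup
    refine ⟨hβ, pos_iff_ne_zero.2 hβ0, ?_⟩
    intro α hα
    have hne : (clubFrom κ.ord g ∩ Iio β).Nonempty := by
      by_contra h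
      rw [not_nonempty_iff_eq_empty] at h
      rw [h, csSup_empty] at hsup
      exact hβ0 hsup.symm
    have : ∃ e ∈ clubFrom κ.ord g ∩ Iio β, α < e := by
      by_contra h
      push_neg at h
      have h2 := csSup_le hne h
      rw [hsup] at h2
      exact absurd h2 (not_le.2 hα)
    obtain ⟨e, ⟨heC, heβ⟩, hαe⟩ := this
    exact (heC.2.2 α hαe).trans heβ

end Reg

section Ultra

lemma exists_nonprincipal (Z : Set Ordinal) (𝒮 : Set (Set Ordinal))
    (hsub : ∀ X ∈ 𝒮, X ⊆ Z)
    (hFIP : ∀ t : Set (Set Ordinal), t ⊆ 𝒮 → t.Finite → ∀ s : Set Ordinal, s.Finite →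
      ((Z ∩ ⋂₀ t) \ s).Nonempty) :
    ∃ d : Set (Set Ordinal), IsNonprincipalOn Z d ∧ 𝒮 ⊆ d := by
  classical
  set 𝒢 : Set (Set Ordinal) := 𝒮 ∪ {X | ∃ s : Set Ordinal, s.Finite ∧ X = Z \ s} with h𝒢
  have hne : Filter.NeBot (Filter.generate 𝒢) := by
    rw [Filter.generate_neBot_iff]
    intro t ht htfin
    have h1 : (t ∩ 𝒮) ⊆ 𝒮 := inter_subset_right
    have h2 : (t ∩ 𝒮).Finite := htfin.subset inter_subset_left
    -- the cofinite part
    have h3 : (t \ 𝒮).Finite := htfin.subset diff_subset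
    have hsel : ∀ X ∈ t \ 𝒮, ∃ s : Set Ordinal, s.Finite ∧ X = Z \ s := by
      intro X hX
      rcases ht hX.1 with h | h
      · exact absurd h hX.2
      · exact h
    choose! sOf hsOf using hsel
    have hsfin : (⋃ X ∈ t \ 𝒮, sOf X).Finite :=
      h3.biUnion fun X hX => (hsOf X hX).1
    obtain ⟨x, hx1, hx2⟩ := hFIP (t ∩ 𝒮) h1 h2 _ hsfin
    refine ⟨x, ?_⟩
    intro X hX
    by_cases hXS : X ∈ 𝒮
    · exact hx1.2 X ⟨hX, hXS⟩
    · rw [(hsOf X ⟨hX, hXS⟩).2]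
      refine ⟨hx1.1, fun hxs => hx2 ?_⟩
      exact mem_biUnion ⟨hX, hXS⟩ hxs
  obtain ⟨U, hU⟩ := Ultrafilter.exists_le (Filter.generate 𝒢)
  have hgen : ∀ X ∈ 𝒢, X ∈ U := fun X hX => hU (Filter.mem_generate_of_mem hX)
  have hZU : Z ∈ U := hgen Z (Or.inr ⟨∅, finite_empty, by simp⟩)
  have hcof : ∀ s : Set Ordinal, s.Finite → Z \ s ∈ U := fun s hs => hgen _ (Or.inr ⟨s, hs, rfl⟩)
  refine ⟨{A | A ⊆ Z ∧ A ∈ U}, ⟨⟨fun A hA => hA.1, ⟨Subset.rfl, hZU⟩, ?_, ?_, ?_, ?_⟩, ?_⟩, ?_⟩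
  · rintro ⟨-, h⟩
    exact U.neBot.ne (Filter.empty_mem_iff_bot.1 h)
  · exact fun A B hA hAB hBZ => ⟨hBZ, U.toFilter.mem_of_superset hA.2 hAB⟩
  · exact fun A B hA hB => ⟨fun x hx => hA.1 hx.1, U.toFilter.inter_mem hA.2 hB.2⟩
  · intro A hAZ
    rcases U.mem_or_compl_mem A with h | h
    · exact Or.inl ⟨hAZ, h⟩
    · refine Or.inr ⟨diff_subset, ?_⟩
      have : Z \ A = Z ∩ Aᶜ := rfl
      rw [this]
      exact U.toFilter.inter_mem hZU h
  · rintro x ⟨-, hx⟩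
    have h2 : Z \ {x} ∈ U := hcof {x} (finite_singleton x)
    have : ({x} : Set Ordinal) ∩ (Z \ {x}) = ∅ := by
      ext y; simp +contextual [not_and, imp_false]
    have h3 := U.toFilter.inter_mem hx h2
    rw [this] at h3
    exact U.neBot.ne (Filter.empty_mem_iff_bot.1 h3)
  · exact fun X hX => ⟨hsub X hX, hgen X (Or.inl hX)⟩

end Ultra

section QBasics

variable {lam : Ordinal}

lemma QZero.zero_not_mem (p : QZero lam) : 0 ∉ p.C := fun h => (p.limit 0 h).pos.ne' rfl

lemma QZero.Z_def (p : QZero lam) (δ : Ordinal) : p.Z δ = Ico δ (nextIn p.C δ) := rfl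

lemma QZero.Z_subset (p : QZero lam) {δ : Ordinal} (hδ : δ ∈ p.C) : p.Z δ ⊆ Iio lam :=
  fun x hx => hx.2.trans_le (le_of_lt (nextIn_lt p.club (p.club.1 hδ))) |>.trans_le le_rfl
    |>.trans_le le_rfl |> fun h => h

lemma QZero.mem_d_infinite (p : QZero lam) {δ : Ordinal} (hδ : δ ∈ p.C)
    {A : Set Ordinal} (hA : A ∈ p.d δ) : A.Infinite := by
  obtain ⟨hU, hnp⟩ := p.ultra δ hδ
  by_contra hni
  have hfin : A.Finite := Set.not_infinite.1 hni
  have key : ∀ n : ℕ, ∀ B ∈ p.d δ, B.Finite → B.ncard ≤ n → False := by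
    intro n
    induction n with
    | zero =>
      intro B hB hBfin hn
      have : B = ∅ := by
        rw [← Set.ncard_eq_zero hBfin]; omega
      exact hU.2.2.1 (this ▸ hB)
    | succ n ih =>
      intro B hB hBfin hn
      have hBne : B ≠ ∅ := fun h => hU.2.2.1 (h ▸ hB)
      obtain ⟨x, hx⟩ := nonempty_iff_ne_empty.2 hBne
      have hxZ : x ∈ Ico δ (nextIn p.C δ) := hU.1 B hB hx
      have hsx : ({x} : Set Ordinal) ⊆ Ico δ (nextIn p.C δ) := by simpa using hxZ
      rcases hU.2.2.2.2.2 {x} hsx with h | h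
      · exact hnp x h
      · have hB' : B ∩ (Ico δ (nextIn p.C δ) \ {x}) ∈ p.d δ := hU.2.2.2.2.1 _ _ hB h
        have heq : B ∩ (Ico δ (nextIn p.C δ) \ {x}) = B \ {x} := by
          ext y
          simp only [mem_inter_iff, mem_diff, mem_singleton_iff]
          exact ⟨fun ⟨h1, _, h3⟩ => ⟨h1, h3⟩, fun ⟨h1, h2⟩ => ⟨h1, hU.1 B hB h1, h2⟩⟩
        rw [heq] at hB'
        refine ih _ hB' hBfin.diff ?_
        have := Set.ncard_diff_singleton_lt_of_mem hx hBfin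
        omega
  exact key (A.ncard) A hA hfin le_rfl

def Basic (p : QZero lam) (A : Set Ordinal) : Prop :=
  A ⊆ Iio lam ∧ ∀ β ∈ p.C, A ∩ p.Z β ∈ p.d β

lemma basic_mem_fil {p : QZero lam} {A : Set Ordinal} (hlam : 0 < lam) (h : Basic p A) :
    A ∈ fil p :=
  ⟨h.1, 0, hlam, fun δ hδ _ => h.2 δ hδ⟩

lemma block_unique {p : QZero lam} {β β' x : Ordinal} (hβ : β ∈ p.C) (hβ' : β' ∈ p.C)
    (hx : x ∈ p.Z β) (hx' : x ∈ p.Z β') : β = β' := by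
  by_contra h
  exact block_disjoint hβ hβ' h hx hx'

end QBasics

section LemmaU

variable {κ : Cardinal.{0}}

lemma lemmaU (hreg : κ.IsRegular) (hunc : Cardinal.aleph0 < κ)
    (p q : QZero κ.ord) (hpq : le0 p q) :
    ∃ ε < κ.ord, ∀ A, Basic p A → ∀ δ ∈ q.C, ε ≤ δ → A ∩ q.Z δ ∈ q.d δ := by
  classical
  have hlam0 : 0 < κ.ord := hreg.ord_pos
  have hlim := Cardinal.isSuccLimit_ord hreg.aleph0_le
  by_contra hcon
  push_neg at hcon
  -- minimal element of p.C
  have hpC_ne : p.C.Nonempty := by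
    obtain ⟨δ, hδ, -⟩ := p.club.2.1 0 hlam0
    exact ⟨δ, hδ⟩
  set minp := sInf p.C with hminp_def
  have hminp : minp ∈ p.C := csInf_mem hpC_ne
  have hminplt : minp < κ.ord := p.club.1 hminp
  -- choice of counterexamples
  have hch : ∀ ε : Ordinal, ε < κ.ord →
      ∃ A δ, Basic p A ∧ δ ∈ q.C ∧ max ε (minp + 1) ≤ δ ∧ A ∩ q.Z δ ∉ q.d δ := by
    intro ε hε
    have hε' : max ε (minp + 1) < κ.ord := max_lt hε (hlim.succ_lt hminplt)
    obtain ⟨A, hA, δ, hδC, hδge, htr⟩ := hcon _ hε'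
    exact ⟨A, δ, hA, hδC, hδge, htr⟩
  choose! Af δf hbasic hδC hδge htrace using hch
  set g : Ordinal → Ordinal := fun ε => nextIn p.C (nextIn q.C (δf ε)) with hg_def
  have hδflt : ∀ ε, ε < κ.ord → δf ε < κ.ord := fun ε hε => q.club.1 (hδC ε hε)
  have hνlt : ∀ ε, ε < κ.ord → nextIn q.C (δf ε) < κ.ord :=
    fun ε hε => nextIn_lt q.club (hδflt ε hε)
  have hg : ∀ ε < κ.ord, g ε < κ.ord := fun ε hε => nextIn_lt p.club (hνlt ε hε)
  set E := clubFrom κ.ord g with hE_def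
  have hE := clubFrom_isClub hreg hunc hg
  set Iset : Ordinal → Set Ordinal :=
    fun ε => {β | β ∈ p.C ∧ β < nextIn q.C (δf ε) ∧ δf ε < nextIn p.C β} with hIset_def
  have hdisj : ∀ ε1 ∈ E, ∀ ε2 ∈ E, ∀ β, β ∈ Iset ε1 → β ∈ Iset ε2 → ε1 = ε2 := by
    have key : ∀ ε1 ∈ E, ∀ ε2 ∈ E, ε1 < ε2 → ∀ β, β ∈ Iset ε1 → β ∈ Iset ε2 → False := by
      intro ε1 hε1 ε2 hε2 hlt β hβ1 hβ2
      have hε1lt : ε1 < κ.ord := hε1.1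
      have hε2lt : ε2 < κ.ord := hε2.1
      have hgε1 : g ε1 < ε2 := hε2.2.2 ε1 hlt
      have h1 : nextIn p.C β ≤ g ε1 :=
        nextIn_mono p.club hβ1.2.1.le (hνlt ε1 hε1lt)
      have h2 : ε2 ≤ δf ε2 := le_trans (le_max_left _ _) (hδge ε2 hε2lt)
      exact absurd (hβ2.2.2) (not_lt.2 (((h1.trans hgε1.le).trans h2)))
    intro ε1 hε1 ε2 hε2 β hβ1 hβ2
    rcases lt_trichotomy ε1 ε2 with h | h | h
    · exact absurd (key ε1 hε1 ε2 hε2 h β hβ1 hβ2) not_false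
    · exact h
    · exact absurd (key ε2 hε2 ε1 hε1 h β hβ2 hβ1) not_false
  -- the glued set
  set pick : Ordinal → Set Ordinal :=
    fun β => if h : ∃ ε ∈ E, β ∈ Iset ε then Af h.choose ∩ p.Z β else p.Z β with hpick_def
  have hpickZ : ∀ β, pick β ⊆ p.Z β := by
    intro β
    simp only [hpick_def]
    split
    · exact inter_subset_right
    · exact Subset.rfl
  have hpickd : ∀ β ∈ p.C, pick β ∈ p.d β := by
    intro β hβ
    simp only [hpick_def]
    split
    next h =>
      have hsp := h.choose_spec
      exact (hbasic _ (hE.1 hsp.1)).2 β hβ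
    next => exact (p.ultra β hβ).1.2.1
  set A : Set Ordinal := ⋃ β ∈ p.C, pick β with hA_def
  have hAblock : ∀ β ∈ p.C, A ∩ p.Z β = pick β := by
    intro β hβ
    apply Subset.antisymm
    · rintro x ⟨hxA, hxZ⟩
      rw [hA_def] at hxA
      obtain ⟨β', hβ', hx'⟩ := mem_iUnion₂.1 hxA
      have : β' = β := block_unique hβ' hβ (hpickZ β' hx') hxZ
      exact this ▸ hx'
    · intro x hx
      exact ⟨mem_iUnion₂.2 ⟨β, hβ, hx⟩, hpickZ β hx⟩
  have hAbasic : Basic p A := by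
    constructor
    · rintro x hx
      rw [hA_def] at hx
      obtain ⟨β, hβ, hx'⟩ := mem_iUnion₂.1 hx
      exact (hpickZ β hx').2.trans_le (nextIn_lt p.club (p.club.1 hβ)).le
    · intro β hβ
      rw [hAblock β hβ]
      exact hpickd β hβ
  obtain ⟨-, ε', hε'lt, htr⟩ := hpq (basic_mem_fil hlam0 hAbasic)
  obtain ⟨ε, hεE, hε'ε⟩ := hE.2.1 ε' hε'lt
  have hεlt : ε < κ.ord := hεE.1
  have hδ : δf ε ∈ q.C := hδC ε hεlt
  have hδge' : ε' ≤ δf ε := le_trans hε'ε.le (le_trans (le_max_left _ _) (hδge ε hεlt))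
  have htrδ : A ∩ q.Z (δf ε) ∈ q.d (δf ε) := htr _ hδ hδge'
  -- show A ∩ q.Z (δf ε) = Af ε ∩ q.Z (δf ε)
  have hminple : minp + 1 ≤ δf ε := le_trans (le_max_right _ _) (hδge ε hεlt)
  have heq : A ∩ q.Z (δf ε) = Af ε ∩ q.Z (δf ε) := by
    ext x
    simp only [mem_inter_iff, and_congr_left_iff]
    intro hxZ
    have hxν : x < nextIn q.C (δf ε) := hxZ.2
    have hxδ : δf ε ≤ x := hxZ.1
    have hxlt : x < κ.ord := hxν.trans (hνlt ε hεlt)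
    have hminx : minp ≤ x := le_trans (le_of_lt (Order.lt_succ minp))
      (le_trans hminple hxδ)
    obtain ⟨hbC, hble, hbnext⟩ := blockOf_spec p.club p.zero_not_mem hxlt hminp hminx
    set b := blockOf p.C x with hb_def
    have hbI : b ∈ Iset ε := ⟨hbC, lt_of_le_of_lt hble hxν, lt_of_le_of_lt hxδ hbnext⟩
    have hxpb : x ∈ p.Z b := ⟨hble, hbnext⟩
    have hiff : x ∈ A ↔ x ∈ pick b := by
      constructor
      · intro hxA
        have : x ∈ A ∩ p.Z b := ⟨hxA, hxpb⟩
        rwa [hAblock b hbC] at this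
      · intro hx
        exact mem_iUnion₂.2 ⟨b, hbC, hx⟩
    rw [hiff]
    have hex : ∃ ε0 ∈ E, b ∈ Iset ε0 := ⟨ε, hεE, hbI⟩
    simp only [hpick_def]
    simp only [hex, dif_pos]
    have hsp := hex.choose_spec
    have : hex.choose = ε := hdisj _ hsp.1 _ hεE b hsp.2 hbI
    rw [this]
    exact ⟨fun h => h.1, fun h => ⟨h, hxpb⟩⟩
  rw [heq] at htrδ
  exact htrace ε hεlt htrδ

end LemmaU

section Helpers

lemma Ico_infinite_of_limit {δ ν : Ordinal} (hδν : δ < ν) (hν : Order.IsSuccLimit ν) :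
    (Ico δ ν).Infinite := by
  have hmem : ∀ n : ℕ, δ + (n : Ordinal) ∈ Ico δ ν := by
    intro n
    refine ⟨le_add_right le_rfl, ?_⟩
    induction n with
    | zero => simpa using hδν
    | succ n ih =>
      have : δ + ((n : Ordinal) + 1) = Order.succ (δ + n) := by
        rw [← add_assoc, Ordinal.add_one_eq_succ]
      rw [Nat.cast_succ, this]
      exact hν.succ_lt ih
  refine Set.infinite_of_injective_forall_mem (f := fun n : ℕ => δ + (n : Ordinal)) ?_ hmem
  intro m n h
  have : δ + (m : Ordinal) = δ + (n : Ordinal) := h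
  exact_mod_cast add_left_cancel_iff.1 this

lemma blockZ_infinite {lam : Ordinal} (p : QZero lam) {δ : Ordinal} (hδ : δ ∈ p.C) :
    (Ico δ (nextIn p.C δ)).Infinite :=
  Ico_infinite_of_limit (lt_nextIn p.club (p.club.1 hδ))
    (p.limit _ (nextIn_mem p.club (p.club.1 hδ)))

variable {κ : Cardinal.{0}}

/-- a default element of `QZero κ.ord` -/
lemma exists_QZero (hreg : κ.IsRegular) (hunc : Cardinal.aleph0 < κ) :
    Nonempty (QZero κ.ord) := by
  classical
  have hlim := Cardinal.isSuccLimit_ord hreg.aleph0_le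
  set C := clubFrom κ.ord (fun α => α + 1) with hC
  have hclub : IsClubIn C κ.ord := clubFrom_isClub hreg hunc (fun α hα => hlim.succ_lt hα)
  have hlimit : ∀ δ ∈ C, Order.IsSuccLimit δ := by
    intro δ hδ
    refine Ordinal.isSuccLimit_iff.2 ⟨pos_iff_ne_zero.1 hδ.2.1, Order.isSuccPrelimit_of_succ_lt fun a ha => ?_⟩
    exact hδ.2.2 a ha
  have hnext_lim : ∀ δ ∈ C, (Ico δ (nextIn C δ)).Infinite := by
    intro δ hδ
    exact Ico_infinite_of_limit (lt_nextIn hclub (hclub.1 hδ))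
      (hlimit _ (nextIn_mem hclub (hclub.1 hδ)))
  have hex : ∀ δ ∈ C, ∃ d : Set (Set Ordinal),
      IsNonprincipalOn (Ico δ (nextIn C δ)) d := by
    intro δ hδ
    have hFIP : ∀ t : Set (Set Ordinal), t ⊆ (∅ : Set (Set Ordinal)) → t.Finite →
        ∀ s : Set Ordinal, s.Finite → ((Ico δ (nextIn C δ) ∩ ⋂₀ t) \ s).Nonempty := by
      intro t ht htfin s hs
      have : t = ∅ := subset_empty_iff.1 ht
      subst this
      simp only [sInter_empty, inter_univ]
      exact ((hnext_lim δ hδ).diff hs).nonempty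
    obtain ⟨d, hd, -⟩ := exists_nonprincipal (Ico δ (nextIn C δ)) ∅ (by simp) hFIP
    exact ⟨d, hd⟩
  refine ⟨⟨C, fun δ => if h : δ ∈ C then (hex δ h).choose else ∅, hclub, hlimit, ?_⟩⟩
  intro δ hδ
  simp only [dif_pos hδ]
  exact (hex δ hδ).choose_spec

end Helpers

section Main

variable {κ : Cardinal.{0}}

lemma exists_ub (hreg : κ.IsRegular) (hunc : Cardinal.aleph0 < κ)
    (G : Set (QZero κ.ord))
    (hdir : ∀ p ∈ G, ∀ q ∈ G, ∃ r ∈ G, le0 p r ∧ le0 q r)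
    (hcard : Cardinal.mk ↥G ≤ Cardinal.lift.{1,0} κ) :
    ∃ r : QZero κ.ord, ∀ p ∈ G, le0 p r := by
  classical
  have hlam0 : 0 < κ.ord := hreg.ord_pos
  have hlim := Cardinal.isSuccLimit_ord hreg.aleph0_le
  rcases eq_empty_or_nonempty G with rfl | hGne
  · exact ⟨(exists_QZero hreg hunc).some, fun p hp => absurd hp (notMem_empty p)⟩
  -- enumeration of G by ordinals < κ.ord
  obtain ⟨P, hPG, hPsurj⟩ : ∃ P : Ordinal → QZero κ.ord,
      (∀ j, P j ∈ G) ∧ ∀ x ∈ G, ∃ j < κ.ord, P j = x := by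
    have h1 : Cardinal.mk ↥G ≤ Cardinal.lift.{1,0} (Cardinal.mk κ.ord.ToType) := by
      rwa [Cardinal.mk_ord_toType]
    rw [← Cardinal.lift_id'.{0,1} (Cardinal.mk ↥G)] at h1
    obtain ⟨f⟩ := Cardinal.lift_mk_le'.1 h1
    set s : κ.ord.ToType → QZero κ.ord := fun t =>
      if h : ∃ g : ↥G, f g = t then (h.choose : QZero κ.ord) else hGne.some with hs
    have hsG : ∀ t, s t ∈ G := by
      intro t
      simp only [hs]
      split
      next h => exact h.choose.2
      next => exact hGne.some_mem
    have hsf : ∀ x (hx : x ∈ G), s (f ⟨x, hx⟩) = x := by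
      intro x hx
      have h : ∃ g : ↥G, f g = f ⟨x, hx⟩ := ⟨⟨x, hx⟩, rfl⟩
      simp only [hs, dif_pos h]
      have := f.injective h.choose_spec
      rw [this]
    refine ⟨fun j => if h : j < κ.ord then s (Ordinal.ToType.mk (o := κ.ord) ⟨j, h⟩) else hGne.some,
      ?_, ?_⟩
    · intro j
      by_cases h : j < κ.ord
      · simp only [dif_pos h]; exact hsG _
      · simp only [dif_neg h]; exact hGne.some_mem
    · intro x hx
      set i := (Ordinal.ToType.mk (o := κ.ord)).symm (f ⟨x, hx⟩) with hi
      refine ⟨(i : Ordinal), i.2, ?_⟩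
      beta_reduce
      rw [dif_pos (show (i : Ordinal) < κ.ord from i.2)]
      show s (Ordinal.ToType.mk (o := κ.ord) i) = x
      rw [hi, OrderIso.apply_symm_apply, hsf x hx]
  -- upper bounds for finite sets of indices
  have hqch : ∀ F : Finset Ordinal, ∃ r ∈ G, ∀ j ∈ F, le0 (P j) r := by
    intro F
    induction F using Finset.induction with
    | empty => exact ⟨hGne.some, hGne.some_mem, by simp⟩
    | insert a Fa hni ih =>
      obtain ⟨r, hrG, hr⟩ := ih
      obtain ⟨r', hr'G, hfst, hsnd⟩ := hdir (P a) (hPG a) r hrG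
      refine ⟨r', hr'G, ?_⟩
      intro j hj
      rcases Finset.mem_insert.1 hj with rfl | hj
      · exact hfst
      · exact fun A hA => hsnd (hr j hj hA)
  choose qF hqFG hqFle using hqch
  have hsucc : ∀ α : Ordinal, α < α + 1 := by
    intro α
    rw [Ordinal.add_one_eq_succ]
    exact Order.lt_succ α
  -- uniformization epsilons from lemmaU
  have hUch : ∀ (F : Finset Ordinal) (j : Ordinal), j ∈ F →
      ∃ ε < κ.ord, ∀ A, Basic (P j) A → ∀ δ ∈ (qF F).C, ε ≤ δ → A ∩ (qF F).Z δ ∈ (qF F).d δ :=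
    fun F j hj => lemmaU hreg hunc _ _ (hqFle F j hj)
  set εU : Finset Ordinal → Ordinal → Ordinal := fun F j =>
    if h : j ∈ F then (hUch F j h).choose else 0 with hεU_def
  have hεUlt : ∀ F j, εU F j < κ.ord := by
    intro F j
    simp only [hεU_def]
    split
    next h => exact (hUch F j h).choose_spec.1
    next => exact hlam0
  have hεUspec : ∀ F j (hj : j ∈ F), ∀ A, Basic (P j) A →
      ∀ δ ∈ (qF F).C, εU F j ≤ δ → A ∩ (qF F).Z δ ∈ (qF F).d δ := by
    intro F j hj
    simp only [hεU_def, dif_pos hj]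
    exact (hUch F j hj).choose_spec.2
  set E' : Finset Ordinal → Ordinal := fun F => F.sup (εU F) with hE'_def
  have hE'lt : ∀ F, E' F < κ.ord := fun F => (Finset.sup_lt_iff hlam0).2 (fun j _ => hεUlt F j)
  have hεUleE' : ∀ F j, j ∈ F → εU F j ≤ E' F := fun F j hj => Finset.le_sup hj
  -- the term function
  set tf : Ordinal → Finset Ordinal → Ordinal := fun α F =>
    if F.Nonempty then
      F.sup (fun j => nextIn (P j).C (nextIn (qF F).C (nextIn (qF F).C (max α (E' F)))))
    else 0 with htf_def
  have htflt : ∀ α < κ.ord, ∀ F, tf α F < κ.ord := by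
    intro α hα F
    simp only [htf_def]
    split
    · refine (Finset.sup_lt_iff hlam0).2 ?_
      intro j _
      exact nextIn_lt (P j).club (nextIn_lt (qF F).club (nextIn_lt (qF F).club
        (max_lt hα (hE'lt F))))
    · exact hlam0
  -- representing Finsets of small ordinals
  set Ψ : (α : Ordinal) → Finset ((α+1).ToType) → Finset Ordinal := fun α F =>
    F.map ⟨fun i => ((Ordinal.ToType.mk (o := (α+1))).symm i : Ordinal),
      fun i1 i2 h => (Ordinal.ToType.mk (o := (α+1))).symm.injective (Subtype.coe_injective h)⟩
    with hΨ_def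
  have hΨ : ∀ α (F : Finset Ordinal), (∀ j ∈ F, j < α + 1) → ∃ F0, Ψ α F0 = F := by
    intro α F hsub
    refine ⟨F.attach.map ⟨fun x => (Ordinal.ToType.mk (o := (α+1))) ⟨x.1, hsub x.1 x.2⟩, ?_⟩, ?_⟩
    · intro x1 x2 h
      have h2 := (Ordinal.ToType.mk (o := (α+1))).injective h
      exact Subtype.ext (congrArg (Subtype.val : ↥(Iio (α+1)) → Ordinal) h2)
    · ext j
      simp only [hΨ_def, Finset.mem_map, Finset.mem_attach, true_and, Function.Embedding.coeFn_mk,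
        Subtype.exists]
      constructor
      · rintro ⟨i, ⟨x, hx, rfl⟩, rfl⟩
        show ((Ordinal.ToType.mk (o := α+1)).symm (Ordinal.ToType.mk ⟨x, hsub x hx⟩) : Ordinal) ∈ F
        rw [OrderIso.symm_apply_apply]
        exact hx
      · intro hj
        exact ⟨(Ordinal.ToType.mk (o := (α+1))) ⟨j, hsub j hj⟩, ⟨j, hj, rfl⟩,
          by
            show ((Ordinal.ToType.mk (o := α+1)).symm (Ordinal.ToType.mk ⟨j, hsub j hj⟩) : Ordinal) = j
            rw [OrderIso.symm_apply_apply]⟩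
  -- the club function
  set bigG : Ordinal → Ordinal := fun α =>
    max (max (⨆ F : Finset ((α+1).ToType), tf α (Ψ α F))
             (⨆ i : (α+1).ToType, nextIn (P ((Ordinal.ToType.mk (o := (α+1))).symm i : Ordinal)).C α))
        (α + 1) with hbigG_def
  have hbigG : ∀ α < κ.ord, bigG α < κ.ord := by
    intro α hα
    have hα1 : α + 1 < κ.ord := hlim.succ_lt hα |>.trans_le le_rfl |> fun h => by
      rwa [Ordinal.add_one_eq_succ]
    refine max_lt (max_lt ?_ ?_) hα1
    · refine Ordinal.iSup_lt_ord ?_ (fun F => htflt α hα _)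
      rw [hreg.cof_eq]
      by_cases hfin : Finite ((α+1).ToType)
      · haveI := Fintype.ofFinite ((α+1).ToType)
        have : Cardinal.mk (Finset ((α+1).ToType)) < Cardinal.aleph0 := by
          rw [Cardinal.mk_lt_aleph0_iff]
          infer_instance
        exact this.trans hunc
      · haveI := not_finite_iff_infinite.1 hfin
        rw [Cardinal.mk_finset_of_infinite, Cardinal.mk_toType]
        exact Cardinal.lt_ord.1 hα1
    · refine iSup_toType_lt hreg hα1 _ ?_
      intro i
      exact nextIn_lt (P _).club hα
  set CR := clubFrom κ.ord bigG with hCR_def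
  have hCRclub : IsClubIn CR κ.ord := clubFrom_isClub hreg hunc hbigG
  have hCRlim : ∀ δ ∈ CR, Order.IsSuccLimit δ := by
    intro δ hδ
    refine Ordinal.isSuccLimit_iff.2 ⟨pos_iff_ne_zero.1 hδ.2.1, Order.isSuccPrelimit_of_succ_lt fun a ha => ?_⟩
    have h1 : a + 1 ≤ bigG a := le_max_right _ _
    have := lt_of_le_of_lt h1 (hδ.2.2 a ha)
    rwa [Ordinal.add_one_eq_succ] at this
  have hdiag : ∀ δ ∈ CR, ∀ j < δ, δ ∈ (P j).C := by
    intro δ hδ j hj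
    have hδlt : δ < κ.ord := hδ.1
    have hnext_in : ∀ α, j ≤ α → α < δ →
        (nextIn (P j).C α ∈ (P j).C ∩ Iio δ ∧ α < nextIn (P j).C α) := by
      intro α hjα hαδ
      have hαlt : α < κ.ord := hαδ.trans hδlt
      have hidx : j < α + 1 := lt_of_le_of_lt hjα (hsucc α)
      have hle : nextIn (P j).C α ≤ bigG α := by
        have hkey : nextIn (P j).C α =
            (fun i => nextIn (P ((Ordinal.ToType.mk (o := (α+1))).symm i : Ordinal)).C α)
              ((Ordinal.ToType.mk (o := (α+1))) ⟨j, hidx⟩) := by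
          simp only [OrderIso.symm_apply_apply]
        have h2 : (⨆ i : (α+1).ToType,
            nextIn (P ((Ordinal.ToType.mk (o := (α+1))).symm i : Ordinal)).C α) ≤ bigG α :=
          le_trans (le_max_right _ _) (le_max_left _ _)
        refine le_trans ?_ h2
        rw [hkey]
        exact le_ciSup (Ordinal.bddAbove_range _) _
      exact ⟨⟨nextIn_mem (P j).club hαlt, lt_of_le_of_lt hle (hδ.2.2 α hαδ)⟩,
        lt_nextIn (P j).club hαlt⟩
    apply (P j).club.2.2 δ hδlt (pos_iff_ne_zero.1 hδ.2.1)
    apply le_antisymm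
    · exact csSup_le ⟨nextIn (P j).C j, (hnext_in j le_rfl hj).1⟩ (fun y hy => hy.2.le)
    · by_contra hlt'
      push_neg at hlt'
      have hmax : max j (sSup ((P j).C ∩ Iio δ)) < δ := max_lt hj hlt'
      obtain ⟨hmem, hgt⟩ := hnext_in _ (le_max_left _ _) hmax
      have hle2 : nextIn (P j).C (max j (sSup ((P j).C ∩ Iio δ))) ≤ sSup ((P j).C ∩ Iio δ) :=
        le_csSup ⟨δ, fun y hy => hy.2.le⟩ hmem
      exact absurd (lt_of_le_of_lt (le_max_right j _) hgt) (not_lt.2 hle2)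
  have htfblock : ∀ δ ∈ CR, ∀ F : Finset Ordinal, (∀ j ∈ F, j < δ) → tf δ F < nextIn CR δ := by
    intro δ hδ F hF
    have hδlt : δ < κ.ord := hδ.1
    have hδ'mem : nextIn CR δ ∈ CR := nextIn_mem hCRclub hδlt
    have hδδ' : δ < nextIn CR δ := lt_nextIn hCRclub hδlt
    obtain ⟨F0, hF0⟩ := hΨ δ F (fun j hj => (hF j hj).trans (hsucc δ))
    calc tf δ F = tf δ (Ψ δ F0) := by rw [hF0]
      _ ≤ ⨆ F1 : Finset ((δ+1).ToType), tf δ (Ψ δ F1) := le_ciSup (Ordinal.bddAbove_range _) F0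
      _ ≤ bigG δ := le_trans (le_max_left _ _) (le_max_left _ _)
      _ < nextIn CR δ := hδ'mem.2.2 δ hδδ'
  -- generator families on blocks of CR
  set Ib : Ordinal → Ordinal → Set Ordinal := fun j δ =>
    {β | β ∈ (P j).C ∧ δ ≤ β ∧ nextIn (P j).C β ≤ nextIn CR δ} with hIb_def
  set Gens : Ordinal → Set (Set Ordinal) := fun δ =>
    {X | ∃ j < δ, ∃ Av : Ordinal → Set Ordinal,
      (∀ β ∈ Ib j δ, Av β ∈ (P j).d β) ∧ X = ⋃ β ∈ Ib j δ, Av β} with hGens_def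
  have hd_subZ : ∀ (j β : Ordinal), β ∈ (P j).C → ∀ B ∈ (P j).d β, B ⊆ (P j).Z β :=
    fun j β hβ => ((P j).ultra β hβ).1.1
  have hGsub : ∀ δ ∈ CR, ∀ X ∈ Gens δ, X ⊆ Ico δ (nextIn CR δ) := by
    intro δ hδ X hX
    obtain ⟨j, hj, Av, hAv, rfl⟩ := hX
    intro x hx
    obtain ⟨β, hβ, hxβ⟩ := mem_iUnion₂.1 hx
    have hxZ := hd_subZ j β hβ.1 _ (hAv β hβ) hxβ
    exact ⟨le_trans hβ.2.1 hxZ.1, lt_of_lt_of_le hxZ.2 hβ.2.2⟩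
  -- FIP of generators together with cofinite sets
  have hFIP : ∀ δ ∈ CR, ∀ t : Set (Set Ordinal), t ⊆ Gens δ → t.Finite →
      ∀ s : Set Ordinal, s.Finite → ((Ico δ (nextIn CR δ) ∩ ⋂₀ t) \ s).Nonempty := by
    intro δ hδ t ht htfin s hs
    have hδlt : δ < κ.ord := hδ.1
    have hδ'mem : nextIn CR δ ∈ CR := nextIn_mem hCRclub hδlt
    have hδ'lt : nextIn CR δ < κ.ord := hCRclub.1 hδ'mem
    have hδδ' : δ < nextIn CR δ := lt_nextIn hCRclub hδlt
    have hZinf : (Ico δ (nextIn CR δ)).Infinite :=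
      Ico_infinite_of_limit hδδ' (hCRlim _ hδ'mem)
    rcases eq_empty_or_nonempty t with rfl | htne
    · simp only [sInter_empty, inter_univ]
      exact (hZinf.diff hs).nonempty
    have hparam : ∀ X ∈ t, ∃ j, j < δ ∧ ∃ Av : Ordinal → Set Ordinal,
        (∀ β ∈ Ib j δ, Av β ∈ (P j).d β) ∧ X = ⋃ β ∈ Ib j δ, Av β := by
      intro X hX
      obtain ⟨j, hj, Av, h1, h2⟩ := ht hX
      exact ⟨j, hj, Av, h1, h2⟩
    choose! jf hjflt Avf hAvd hXeq using hparam
    have himg : (jf '' t).Finite := htfin.image _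
    set F : Finset Ordinal := himg.toFinset with hF_def
    have hjfF : ∀ X ∈ t, jf X ∈ F := by
      intro X hX
      rw [hF_def, Set.Finite.mem_toFinset]
      exact mem_image_of_mem jf hX
    have hFne : F.Nonempty := by
      obtain ⟨X, hX⟩ := htne
      exact ⟨jf X, hjfF X hX⟩
    have hFlt : ∀ j ∈ F, j < δ := by
      intro j hj
      rw [hF_def, Set.Finite.mem_toFinset] at hj
      obtain ⟨X, hX, rfl⟩ := hj
      exact hjflt X hX
    have hmaxlt : max δ (E' F) < κ.ord := max_lt hδlt (hE'lt F)
    set γ := nextIn (qF F).C (max δ (E' F)) with hγ_def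
    have hγC : γ ∈ (qF F).C := nextIn_mem (qF F).club hmaxlt
    have hγlt : γ < κ.ord := (qF F).club.1 hγC
    have hδγ : δ ≤ γ := le_of_lt (lt_of_le_of_lt (le_max_left _ _) (lt_nextIn (qF F).club hmaxlt))
    set ν := nextIn (qF F).C γ with hν_def
    have hνlt : ν < κ.ord := nextIn_lt (qF F).club hγlt
    have hterm : ∀ j ∈ F, nextIn (P j).C ν < nextIn CR δ := by
      intro j hj
      have h1 : nextIn (P j).C ν ≤ tf δ F := by
        have h2 : tf δ F = F.sup
            (fun j => nextIn (P j).C (nextIn (qF F).C (nextIn (qF F).C (max δ (E' F))))) := by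
          simp only [htf_def, if_pos hFne]
        rw [h2, hν_def, hγ_def]
        exact Finset.le_sup
          (f := fun j => nextIn (P j).C (nextIn (qF F).C (nextIn (qF F).C (max δ (E' F))))) hj
      exact lt_of_le_of_lt h1 (htfblock δ hδ F hFlt)
    have hνδ' : ν ≤ nextIn CR δ := by
      obtain ⟨j0, hj0⟩ := hFne
      exact le_of_lt (lt_trans (lt_nextIn (P j0).club hνlt) (hterm j0 hj0))
    have hZq : Ico γ ν ⊆ Ico δ (nextIn CR δ) :=
      fun x hx => ⟨hδγ.trans hx.1, lt_of_lt_of_le hx.2 hνδ'⟩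
    set Bf : Set Ordinal → Set Ordinal := fun X =>
      X ∪ ⋃ β ∈ ((P (jf X)).C \ Ib (jf X) δ), (P (jf X)).Z β with hBf_def
    -- traces of the extended sets on blocks
    have hBtrace : ∀ X ∈ t, ∀ β ∈ (P (jf X)).C,
        Bf X ∩ (P (jf X)).Z β = if β ∈ Ib (jf X) δ then Avf X β else (P (jf X)).Z β := by
      intro X hX β hβ
      by_cases hIbm : β ∈ Ib (jf X) δ
      · rw [if_pos hIbm]
        apply Subset.antisymm
        · rintro x ⟨hxB, hxZ⟩
          rcases hxB with hxX | hxU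
          · rw [hXeq X hX] at hxX
            obtain ⟨β', hβ', hxβ'⟩ := mem_iUnion₂.1 hxX
            have hxZ' := hd_subZ _ β' hβ'.1 _ (hAvd X hX β' hβ') hxβ'
            have : β' = β := block_unique hβ'.1 hβ hxZ' hxZ
            exact this ▸ hxβ'
          · obtain ⟨β'', hβ'', hxβ''⟩ := mem_iUnion₂.1 hxU
            have : β'' = β := block_unique hβ''.1 hβ hxβ'' hxZ
            exact absurd (this ▸ hIbm) hβ''.2
        · intro x hx
          have hxX : x ∈ X := by
            rw [hXeq X hX]
            exact mem_iUnion₂.2 ⟨β, hIbm, hx⟩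
          exact ⟨Or.inl hxX, hd_subZ _ β hβ _ (hAvd X hX β hIbm) hx⟩
      · rw [if_neg hIbm]
        apply Subset.antisymm inter_subset_right
        intro x hx
        exact ⟨Or.inr (mem_iUnion₂.2 ⟨β, ⟨hβ, hIbm⟩, hx⟩), hx⟩
    have hBbasic : ∀ X ∈ t, Basic (P (jf X)) (Bf X) := by
      intro X hX
      constructor
      · rintro x (hxX | hxU)
        · exact lt_of_lt_of_le (hGsub δ hδ X (ht hX) hxX).2 hδ'lt.le
        · obtain ⟨β, hβ, hxβ⟩ := mem_iUnion₂.1 hxU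
          exact lt_of_lt_of_le hxβ.2 (nextIn_lt (P (jf X)).club ((P (jf X)).club.1 hβ.1)).le
      · intro β hβ
        rw [hBtrace X hX β hβ]
        split
        next h => exact hAvd X hX β h
        next => exact ((P (jf X)).ultra β hβ).1.2.1
    have hεγ : ∀ X ∈ t, εU F (jf X) ≤ γ := by
      intro X hX
      refine le_trans (le_trans (hεUleE' F (jf X) (hjfF X hX)) (le_max_right δ _)) ?_
      exact (lt_nextIn (qF F).club hmaxlt).le
    have hBtr : ∀ X ∈ t, Bf X ∩ Ico γ ν ∈ (qF F).d γ := by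
      intro X hX
      have := hεUspec F (jf X) (hjfF X hX) (Bf X) (hBbasic X hX) γ hγC (hεγ X hX)
      exact this
    have hBX : ∀ X ∈ t, Bf X ∩ Ico γ ν ⊆ X := by
      intro X hX x hx
      obtain ⟨hxB, hxγν⟩ := hx
      have hxlt : x < κ.ord := hxγν.2.trans hνlt
      have hδC' : δ ∈ (P (jf X)).C := hdiag δ hδ (jf X) (hjflt X hX)
      have hδx : δ ≤ x := hδγ.trans hxγν.1
      obtain ⟨hbC, hble, hbnext⟩ :=
        blockOf_spec (P (jf X)).club (P (jf X)).zero_not_mem hxlt hδC' hδx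
      have hbIb : blockOf (P (jf X)).C x ∈ Ib (jf X) δ := by
        refine ⟨hbC, le_csSup ⟨x, fun y hy => hy.2⟩ ⟨hδC', hδx⟩, ?_⟩
        have h1 : blockOf (P (jf X)).C x ≤ ν := hble.trans hxγν.2.le
        exact le_of_lt (lt_of_le_of_lt (nextIn_mono (P (jf X)).club h1 hνlt)
          (hterm (jf X) (hjfF X hX)))
      rcases hxB with hxX | hxU
      · exact hxX
      · obtain ⟨β'', hβ'', hxβ''⟩ := mem_iUnion₂.1 hxU
        have : β'' = blockOf (P (jf X)).C x := block_unique hβ''.1 hbC hxβ'' ⟨hble, hbnext⟩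
        exact absurd (this ▸ hbIb) hβ''.2
    -- the finite intersection is large for (qF F).d γ
    have hqZγ : (qF F).Z γ = Ico γ ν := rfl
    have hultraγ := ((qF F).ultra γ hγC).1
    have hIcoγ : Ico γ ν ∈ (qF F).d γ := by
      have := hultraγ.2.1
      rwa [← hqZγ]
    have hInter : ∀ u : Set (Set Ordinal), u.Finite → u ⊆ t →
        (Ico γ ν ∩ ⋂₀ (Bf '' u)) ∈ (qF F).d γ := by
      intro u hufin
      refine Set.Finite.induction_on u hufin ?_ ?_
      · intro _
        simp only [image_empty, sInter_empty, inter_univ]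
        exact hIcoγ
      · intro X u' hni hu'fin ih hsub
        rw [insert_subset_iff] at hsub
        have ihm := ih hsub.2
        rw [image_insert_eq, sInter_insert]
        have heq : Ico γ ν ∩ (Bf X ∩ ⋂₀ (Bf '' u')) =
            (Bf X ∩ Ico γ ν) ∩ (Ico γ ν ∩ ⋂₀ (Bf '' u')) := by
          ext x
          simp only [mem_inter_iff]
          tauto
        rw [heq]
        exact hultraγ.2.2.2.2.1 _ _ (hBtr X hsub.1) ihm
    have hYinf : (Ico γ ν ∩ ⋂₀ (Bf '' t)).Infinite :=
      (qF F).mem_d_infinite hγC (hInter t htfin Subset.rfl)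
    obtain ⟨x, hxY, hxs⟩ := (hYinf.diff hs).nonempty
    refine ⟨x, ⟨⟨hZq hxY.1, mem_sInter.2 fun X hX => ?_⟩, hxs⟩⟩
    have hxBf : x ∈ Bf X := mem_sInter.1 hxY.2 _ (mem_image_of_mem Bf hX)
    exact hBX X hX ⟨hxBf, hxY.1⟩
  -- build the ultrafilters on the blocks of CR
  have hex : ∀ δ ∈ CR, ∃ d : Set (Set Ordinal),
      IsNonprincipalOn (Ico δ (nextIn CR δ)) d ∧ Gens δ ⊆ d :=
    fun δ hδ => exists_nonprincipal _ (Gens δ) (hGsub δ hδ) (hFIP δ hδ)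
  set dR : Ordinal → Set (Set Ordinal) := fun δ =>
    if h : δ ∈ CR then (hex δ h).choose else ∅ with hdR_def
  have hdRultra : ∀ δ ∈ CR, IsNonprincipalOn (Ico δ (nextIn CR δ)) (dR δ) := by
    intro δ hδ
    simp only [hdR_def, dif_pos hδ]
    exact (hex δ hδ).choose_spec.1
  have hdRgen : ∀ δ ∈ CR, Gens δ ⊆ dR δ := by
    intro δ hδ
    simp only [hdR_def, dif_pos hδ]
    exact (hex δ hδ).choose_spec.2
  refine ⟨⟨CR, dR, hCRclub, hCRlim, hdRultra⟩, ?_⟩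
  intro p hp
  obtain ⟨j, hjlt, rfl⟩ := hPsurj p hp
  intro A hA
  obtain ⟨hAsub, ε, hεlt, htr⟩ := hA
  have hj1 : j + 1 < κ.ord := by
    rw [Ordinal.add_one_eq_succ]
    exact hlim.succ_lt hjlt
  refine ⟨hAsub, max ε (j+1), max_lt hεlt hj1, ?_⟩
  intro δ hδ hge
  have hδCR : δ ∈ CR := hδ
  have hδlt : δ < κ.ord := hCRclub.1 hδCR
  have hjδ : j < δ := lt_of_lt_of_le (lt_of_lt_of_le (hsucc j) (le_max_right ε (j+1))) hge
  have hεδ : ε ≤ δ := le_trans (le_max_left _ _) hge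
  have hXgen : (⋃ β ∈ Ib j δ, (A ∩ (P j).Z β)) ∈ Gens δ := by
    refine ⟨j, hjδ, fun β => A ∩ (P j).Z β, ?_, rfl⟩
    intro β hβ
    exact htr β hβ.1 (le_trans hεδ hβ.2.1)
  have hXd : (⋃ β ∈ Ib j δ, (A ∩ (P j).Z β)) ∈ dR δ := hdRgen δ hδCR hXgen
  have hultra := (hdRultra δ hδCR).1
  have hXsub : (⋃ β ∈ Ib j δ, (A ∩ (P j).Z β)) ⊆ A ∩ Ico δ (nextIn CR δ) := by
    intro x hx
    refine ⟨?_, hGsub δ hδCR _ hXgen hx⟩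
    obtain ⟨β, hβ, hxβ⟩ := mem_iUnion₂.1 hx
    exact hxβ.1
  exact hultra.2.2.2.1 _ _ hXd hXsub inter_subset_right

end Main

/-- A `≤⁰`-directed `G* ⊆ Q⁰_λ` of size `≤ λ` has a `≤⁰`-upper bound; consequently
`fil(G*)` is not an ultrafilter on `λ`. -/
theorem statement4 (κ : Cardinal.{0}) (hreg : κ.IsRegular) (hunc : Cardinal.aleph0 < κ)
    (G : Set (QZero κ.ord))
    (hdir : ∀ p ∈ G, ∀ q ∈ G, ∃ r ∈ G, le0 p r ∧ le0 q r)
    (hcard : Cardinal.mk ↥G ≤ Cardinal.lift.{1,0} κ) :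
    (∃ r : QZero κ.ord, ∀ p ∈ G, le0 p r) ∧
    ¬ IsUltrafilterOn (Iio κ.ord) (filG G) := by
  obtain ⟨r, hub⟩ := exists_ub hreg hunc G hdir hcard
  refine ⟨⟨r, hub⟩, ?_⟩
  intro hultra
  set S : Set Ordinal := {δ | δ ∈ r.C ∧ ∃ δ0 ∈ r.C, δ = nextIn r.C δ0} with hS_def
  set A : Set Ordinal := ⋃ δ ∈ S, r.Z δ with hA_def
  have hAsub : A ⊆ Iio κ.ord := by
    intro x hx
    obtain ⟨δ, hδ, hxδ⟩ := mem_iUnion₂.1 hx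
    exact lt_trans hxδ.2 (nextIn_lt r.club (r.club.1 hδ.1))
  have hSunb : ∀ α < κ.ord, ∃ δ ∈ S, α < δ := by
    intro α hα
    obtain ⟨δ0, hδ0, hαδ0⟩ := r.club.2.1 α hα
    have hδ0lt : δ0 < κ.ord := r.club.1 hδ0
    refine ⟨nextIn r.C δ0, ⟨nextIn_mem r.club hδ0lt, δ0, hδ0, rfl⟩, ?_⟩
    exact lt_trans hαδ0 (lt_nextIn r.club hδ0lt)
  have hLunb : ∀ α < κ.ord, ∃ δ, δ ∈ r.C ∧ δ ∉ S ∧ α < δ := by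
    intro α hα
    set c : ℕ → Ordinal := fun n => (nextIn r.C)^[n] (nextIn r.C α) with hc_def
    have hc0 : c 0 = nextIn r.C α := rfl
    have hcsucc : ∀ n, c (n+1) = nextIn r.C (c n) := by
      intro n
      rw [hc_def]
      simp [Function.iterate_succ_apply']
    have hcC : ∀ n, c n ∈ r.C ∧ c n < κ.ord := by
      intro n
      induction n with
      | zero => exact ⟨nextIn_mem r.club hα, nextIn_lt r.club hα⟩
      | succ n ih =>
        rw [hcsucc n]
        exact ⟨nextIn_mem r.club ih.2, nextIn_lt r.club ih.2⟩
    have hcmono : ∀ n, c n < c (n+1) := by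
      intro n
      rw [hcsucc n]
      exact lt_nextIn r.club (hcC n).2
    set δ := ⨆ n, c n with hδ_def
    have hδlt : δ < κ.ord := iSup_nat_lt hreg hunc c (fun n => (hcC n).2)
    have hcle : ∀ n, c n ≤ δ := fun n => le_ciSup (Ordinal.bddAbove_range c) n
    have hclt : ∀ n, c n < δ := fun n => lt_of_lt_of_le (hcmono n) (hcle (n+1))
    have hcex : ∀ x < δ, ∃ n, x < c n := by
      intro x hx
      by_contra h
      push_neg at h
      exact absurd (ciSup_le h) (not_le.2 hx)
    have hδC : δ ∈ r.C := by
      have hδ0 : δ ≠ 0 := by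
        intro h
        exact absurd (h ▸ hclt 0) (not_lt_of_ge zero_le)
      refine r.club.2.2 δ hδlt hδ0 ?_
      apply le_antisymm
      · exact csSup_le ⟨c 0, (hcC 0).1, hclt 0⟩ (fun y hy => hy.2.le)
      · by_contra h
        push_neg at h
        obtain ⟨n, hn⟩ := hcex _ h
        have := le_csSup (⟨δ, fun y hy => hy.2.le⟩ : BddAbove (r.C ∩ Iio δ)) ⟨(hcC n).1, hclt n⟩
        exact absurd (lt_of_lt_of_le hn this) (lt_irrefl _)
    have hδnS : δ ∉ S := by
      rintro ⟨-, δ0, hδ0C, hδeq⟩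
      have hδ0lt : δ0 < δ := hδeq ▸ lt_nextIn r.club (r.club.1 hδ0C)
      obtain ⟨n, hn⟩ := hcex δ0 hδ0lt
      have h1 : nextIn r.C δ0 ≤ c n := nextIn_le_of_mem (hcC n).1 hn
      exact absurd (lt_of_le_of_lt (hδeq ▸ h1) (hclt n)) (lt_irrefl _)
    exact ⟨δ, hδC, hδnS, lt_of_lt_of_le (lt_nextIn r.club hα) ((hc0 ▸ hcle 0))⟩
  have hA_L : ∀ δ ∈ r.C, δ ∉ S → A ∩ r.Z δ = ∅ := by
    intro δ hδ hδnS
    rw [eq_empty_iff_forall_notMem]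
    rintro x ⟨hxA, hxZ⟩
    obtain ⟨δ', hδ', hxδ'⟩ := mem_iUnion₂.1 hxA
    have : δ' = δ := block_unique hδ'.1 hδ hxδ' hxZ
    exact hδnS (this ▸ hδ')
  have hA_S : ∀ δ ∈ S, (Iio κ.ord \ A) ∩ r.Z δ = ∅ := by
    intro δ hδ
    rw [eq_empty_iff_forall_notMem]
    rintro x ⟨⟨-, hxA⟩, hxZ⟩
    exact hxA (mem_iUnion₂.2 ⟨δ, hδ, hxZ⟩)
  have hempty : ∀ δ ∈ r.C, (∅ : Set Ordinal) ∉ r.d δ := fun δ hδ => (r.ultra δ hδ).1.2.2.1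
  rcases hultra.2.2.2.2.2 A hAsub with hmem | hmem
  · obtain ⟨p0, hp0G, hp0⟩ := mem_iUnion₂.1 hmem
    obtain ⟨-, ε, hεlt, htr⟩ := hub p0 hp0G hp0
    obtain ⟨δ, hδC, hδnS, hεδ⟩ := hLunb ε hεlt
    have := htr δ hδC hεδ.le
    rw [show A ∩ r.Z δ = ∅ from hA_L δ hδC hδnS] at this
    exact hempty δ hδC this
  · obtain ⟨p0, hp0G, hp0⟩ := mem_iUnion₂.1 hmem
    obtain ⟨-, ε, hεlt, htr⟩ := hub p0 hp0G hp0
    obtain ⟨δ, hδS, hεδ⟩ := hSunb ε hεlt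
    have := htr δ hδS.1 hεδ.le
    rw [show (Iio κ.ord \ A) ∩ r.Z δ = ∅ from hA_S δ hδS] at this
    exact hempty δ hδS.1 this
end
end

section
/- A uniform ultrafilter D on λ is weakly reasonable if and only if for every increasing continuous sequence ⟨δ_ξ : ξ < λ⟩ of ordinals below λ there is a club C* of λ such that ⋃{ [δ_ξ, δ_{ξ+1}) : ξ ∈ C* } ∉ D. -/
open Set

noncomputable section

namespace Statement5Aux

open Cardinal Ordinal

variable {κ : Cardinal.{0}}

lemma aux_add_lt (hκ : ℵ₀ ≤ κ) {a b : Ordinal} (ha : a < κ.ord) (hb : b < κ.ord) :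
    a + b < κ.ord := by
  rw [Cardinal.lt_ord] at ha hb ⊢
  rw [Ordinal.card_add]
  exact Cardinal.add_lt_of_lt hκ ha hb

lemma aux_natSup_lt (hreg : κ.IsRegular) (hunc : ℵ₀ < κ) {a : ℕ → Ordinal}
    (h : ∀ n, a n < κ.ord) : (⨆ n, a n) < κ.ord :=
  Cardinal.iSup_lt_ord_of_isRegular hreg (by simpa using hunc) h

lemma exists_between_of_sSup {X : Set Ordinal} {β γ : Ordinal} (hβ : β ≠ 0)
    (hsup : sSup (X ∩ Iio β) = β) (hγ : γ < β) : ∃ e ∈ X ∩ Iio β, γ < e := by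
  rcases eq_empty_or_nonempty (X ∩ Iio β) with he | hne
  · rw [he, csSup_empty] at hsup
    exact absurd hsup.symm hβ
  · by_contra h
    push_neg at h
    have : sSup (X ∩ Iio β) ≤ γ := csSup_le hne h
    rw [hsup] at this
    exact absurd hγ (not_lt.2 this)

lemma mem_of_closure {C : Set Ordinal} {lam : Ordinal} (hC : IsClubIn C lam)
    {δ : Ordinal} (hδ : δ < lam) (hne : δ ≠ 0)
    (h : ∀ β < δ, ∃ c ∈ C, β < c ∧ c < δ) : δ ∈ C := by
  apply hC.2.2 δ hδ hne
  have hbdd : BddAbove (C ∩ Iio δ) := ⟨δ, fun x hx => le_of_lt hx.2⟩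
  apply le_antisymm
  · obtain ⟨c, hc, _, hcδ⟩ := h 0 (pos_iff_ne_zero.2 hne)
    exact csSup_le ⟨c, hc, hcδ⟩ (fun x hx => le_of_lt hx.2)
  · by_contra hlt
    push_neg at hlt
    obtain ⟨c, hc, hsc, hcδ⟩ := h _ hlt
    exact absurd (le_csSup hbdd ⟨hc, hcδ⟩) (not_le.2 hsc)

lemma isClubIn_inter (hreg : κ.IsRegular) (hunc : ℵ₀ < κ)
    {C₁ C₂ : Set Ordinal} (h1 : IsClubIn C₁ κ.ord) (h2 : IsClubIn C₂ κ.ord) :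
    IsClubIn (C₁ ∩ C₂) κ.ord := by
  classical
  refine ⟨fun x hx => h1.1 hx.1, ?_, ?_⟩
  · -- unboundedness
    intro β hβ
    set pick1 : Ordinal → Ordinal := fun x =>
      if h : x < κ.ord then (h1.2.1 x h).choose else 0 with hp1
    set pick2 : Ordinal → Ordinal := fun x =>
      if h : x < κ.ord then (h2.2.1 x h).choose else 0 with hp2
    have spec1 : ∀ x, x < κ.ord → pick1 x ∈ C₁ ∧ x < pick1 x := by
      intro x hx
      simp only [hp1, dif_pos hx]
      exact ⟨(h1.2.1 x hx).choose_spec.1, (h1.2.1 x hx).choose_spec.2⟩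
    have spec2 : ∀ x, x < κ.ord → pick2 x ∈ C₂ ∧ x < pick2 x := by
      intro x hx
      simp only [hp2, dif_pos hx]
      exact ⟨(h2.2.1 x hx).choose_spec.1, (h2.2.1 x hx).choose_spec.2⟩
    set a : ℕ → Ordinal := fun n => Nat.rec (pick1 β) (fun _ x => pick1 (pick2 x)) n with ha
    have key : ∀ n, a n ∈ C₁ ∧ a n < κ.ord ∧ pick2 (a n) ∈ C₂ ∧ a n < pick2 (a n) ∧
        pick2 (a n) < κ.ord ∧ pick2 (a n) < a (n + 1) := by
      intro n
      induction n with
      | zero =>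
        have h0 : a 0 ∈ C₁ := (spec1 β hβ).1
        have h0κ : a 0 < κ.ord := h1.1 h0
        have h2' := spec2 _ h0κ
        have h2κ : pick2 (a 0) < κ.ord := h2.1 h2'.1
        exact ⟨h0, h0κ, h2'.1, h2'.2, h2κ, (spec1 _ h2κ).2⟩
      | succ n ih =>
        have hs : a (n + 1) = pick1 (pick2 (a n)) := rfl
        have h0 : a (n+1) ∈ C₁ := by rw [hs]; exact (spec1 _ ih.2.2.2.2.1).1
        have h0κ : a (n+1) < κ.ord := h1.1 h0
        have h2' := spec2 _ h0κ
        have h2κ : pick2 (a (n+1)) < κ.ord := h2.1 h2'.1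
        exact ⟨h0, h0κ, h2'.1, h2'.2, h2κ, (spec1 _ h2κ).2⟩
    have haκ : ∀ n, a n < κ.ord := fun n => (key n).2.1
    have hbdd : BddAbove (range a) := ⟨κ.ord, by rintro x ⟨n, rfl⟩; exact (haκ n).le⟩
    set δ : Ordinal := ⨆ n, a n with hδdef
    have hδκ : δ < κ.ord := aux_natSup_lt hreg hunc haκ
    have hlea : ∀ n, a n ≤ δ := fun n => le_ciSup hbdd n
    have hltδ : ∀ n, a n < δ :=
      fun n => lt_of_lt_of_le (lt_trans (key n).2.2.2.1 (key n).2.2.2.2.2) (hlea (n+1))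
    have hlt2δ : ∀ n, pick2 (a n) < δ :=
      fun n => lt_of_lt_of_le (key n).2.2.2.2.2 (hlea (n+1))
    have hβδ : β < δ := lt_of_lt_of_le (spec1 β hβ).2 (hlea 0)
    have hδ0 : δ ≠ 0 := fun h => by simp [h] at hβδ
    have hfind : ∀ γ < δ, ∃ n, γ < a n := by
      intro γ hγ
      rw [hδdef, Ordinal.lt_iSup_iff] at hγ
      exact hγ
    have hδ1 : δ ∈ C₁ := by
      apply mem_of_closure h1 hδκ hδ0
      intro γ hγ
      obtain ⟨n, hn⟩ := hfind γ hγ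
      exact ⟨a n, (key n).1, hn, hltδ n⟩
    have hδ2 : δ ∈ C₂ := by
      apply mem_of_closure h2 hδκ hδ0
      intro γ hγ
      obtain ⟨n, hn⟩ := hfind γ hγ
      exact ⟨pick2 (a n), (key n).2.2.1, lt_trans hn (key n).2.2.2.1, hlt2δ n⟩
    exact ⟨δ, ⟨hδ1, hδ2⟩, hβδ⟩
  · -- closedness
    intro β hβ hβ0 hsup
    have hne : (C₁ ∩ C₂ ∩ Iio β).Nonempty := by
      rcases eq_empty_or_nonempty (C₁ ∩ C₂ ∩ Iio β) with he | hne
      · rw [he, csSup_empty] at hsup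
        exact absurd hsup.symm hβ0
      · exact hne
    have hupper : ∀ {X : Set Ordinal}, sSup (X ∩ Iio β) ≤ β := by
      intro X
      rcases eq_empty_or_nonempty (X ∩ Iio β) with he | hne'
      · rw [he, csSup_empty]; exact zero_le
      · exact csSup_le hne' (fun x hx => le_of_lt hx.2)
    have hbdd1 : BddAbove (C₁ ∩ Iio β) := ⟨β, fun x hx => le_of_lt hx.2⟩
    have hbdd2 : BddAbove (C₂ ∩ Iio β) := ⟨β, fun x hx => le_of_lt hx.2⟩
    have hs1 : sSup (C₁ ∩ Iio β) = β := by
      refine le_antisymm hupper ?_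
      calc β = sSup (C₁ ∩ C₂ ∩ Iio β) := hsup.symm
        _ ≤ sSup (C₁ ∩ Iio β) :=
          csSup_le_csSup hbdd1 hne (fun x hx => ⟨hx.1.1, hx.2⟩)
    have hs2 : sSup (C₂ ∩ Iio β) = β := by
      refine le_antisymm hupper ?_
      calc β = sSup (C₁ ∩ C₂ ∩ Iio β) := hsup.symm
        _ ≤ sSup (C₂ ∩ Iio β) :=
          csSup_le_csSup hbdd2 hne (fun x hx => ⟨hx.1.2, hx.2⟩)
    exact ⟨h1.2.2 β hβ hβ0 hs1, h2.2.2 β hβ hβ0 hs2⟩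

lemma le_delta {δs : Ordinal → Ordinal}
    (hlt : ∀ ξ < κ.ord, δs ξ < κ.ord)
    (hmono : ∀ ξ ζ : Ordinal, ξ < ζ → ζ < κ.ord → δs ξ < δs ζ) :
    ∀ ξ < κ.ord, ξ ≤ δs ξ := by
  intro ξ
  induction ξ using Ordinal.induction with
  | h ξ IH =>
    intro hξ
    by_contra h
    push_neg at h
    have h2 : δs (δs ξ) < δs ξ := hmono (δs ξ) ξ h hξ
    exact absurd h2 (not_lt.2 (IH (δs ξ) h (hlt ξ hξ)))

lemma fixed_club (hreg : κ.IsRegular) (hunc : ℵ₀ < κ) {δs : Ordinal → Ordinal}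
    (hlt : ∀ ξ < κ.ord, δs ξ < κ.ord)
    (hmono : ∀ ξ ζ : Ordinal, ξ < ζ → ζ < κ.ord → δs ξ < δs ζ)
    (hcont : ∀ ξ < κ.ord, Order.IsSuccLimit ξ → δs ξ = sSup (δs '' Iio ξ)) :
    IsClubIn {ξ | ξ < κ.ord ∧ δs ξ = ξ} κ.ord := by
  have hord : Order.IsSuccLimit κ.ord := Cardinal.isSuccLimit_ord hreg.aleph0_le
  refine ⟨fun x hx => hx.1, ?_, ?_⟩
  · -- unbounded
    intro β hβ
    set a : ℕ → Ordinal := fun n => Nat.rec (β + 1) (fun _ x => δs x + 1) n with ha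
    have haκ : ∀ n, a n < κ.ord := by
      intro n
      induction n with
      | zero => exact hord.succ_lt hβ
      | succ n ih => exact hord.succ_lt (hlt _ ih)
    have hstep : ∀ n, a n < a (n + 1) := by
      intro n
      have : a (n+1) = δs (a n) + 1 := rfl
      rw [this]
      exact lt_of_le_of_lt (le_delta hlt hmono (a n) (haκ n)) (Order.lt_succ _)
    have hbdd : BddAbove (range a) := ⟨κ.ord, by rintro x ⟨n, rfl⟩; exact (haκ n).le⟩
    set δ : Ordinal := ⨆ n, a n with hδdef
    have hδκ : δ < κ.ord := aux_natSup_lt hreg hunc haκ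
    have hlea : ∀ n, a n ≤ δ := fun n => le_ciSup hbdd n
    have hltδ : ∀ n, a n < δ := fun n => lt_of_lt_of_le (hstep n) (hlea (n+1))
    have hfind : ∀ γ < δ, ∃ n, γ < a n := by
      intro γ hγ
      rw [hδdef, Ordinal.lt_iSup_iff] at hγ
      exact hγ
    have hβδ : β < δ := lt_of_lt_of_le (Order.lt_succ β) (hlea 0)
    have hδlim : Order.IsSuccLimit δ := by
      rw [Ordinal.isSuccLimit_iff]
      constructor
      · intro h
        rw [h] at hβδ
        exact absurd hβδ (by simp)
      · refine Order.isSuccPrelimit_of_succ_lt fun γ hγ => ?_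
        obtain ⟨n, hn⟩ := hfind γ hγ
        exact lt_of_le_of_lt (Order.succ_le_of_lt hn) (hltδ n)
    have hfix : δs δ = δ := by
      have h1 : δs δ = sSup (δs '' Iio δ) := hcont δ hδκ hδlim
      have h2 : sSup (δs '' Iio δ) ≤ δ := by
        apply csSup_le (by exact ⟨δs 0, 0, hδlim.pos, rfl⟩)
        rintro x ⟨γ, hγ, rfl⟩
        obtain ⟨n, hn⟩ := hfind γ hγ
        have : δs γ < δs (a n) := hmono γ (a n) hn (haκ n)
        have h3 : δs (a n) < a (n + 1) := Order.lt_succ _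
        exact le_of_lt (lt_of_lt_of_le (lt_trans this h3) (hlea (n+1)))
      exact le_antisymm (h1 ▸ h2) (le_delta hlt hmono δ hδκ)
    exact ⟨δ, ⟨hδκ, hfix⟩, hβδ⟩
  · -- closed
    intro β hβ hβ0 hsup
    refine ⟨hβ, ?_⟩
    have hdense : ∀ γ < β, ∃ e, (e < κ.ord ∧ δs e = e) ∧ e < β ∧ γ < e := by
      intro γ hγ
      obtain ⟨e, ⟨he, heβ⟩, hγe⟩ := exists_between_of_sSup hβ0 hsup hγ
      exact ⟨e, he, heβ, hγe⟩
    have hβlim : Order.IsSuccLimit β := by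
      rw [Ordinal.isSuccLimit_iff]
      constructor
      · exact hβ0
      · refine Order.isSuccPrelimit_of_succ_lt fun γ hγ => ?_
        obtain ⟨e, _, heβ, hγe⟩ := hdense γ hγ
        exact lt_of_le_of_lt (Order.succ_le_of_lt hγe) heβ
    have h1 : δs β = sSup (δs '' Iio β) := hcont β hβ hβlim
    have h2 : sSup (δs '' Iio β) ≤ β := by
      apply csSup_le (by exact ⟨δs 0, 0, hβlim.pos, rfl⟩)
      rintro x ⟨γ, hγ, rfl⟩
      obtain ⟨e, ⟨heκ, hee⟩, heβ, hγe⟩ := hdense γ hγ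
      have : δs γ < δs e := hmono γ e hγe heκ
      rw [hee] at this
      exact le_of_lt (lt_trans this heβ)
    exact le_antisymm (h1 ▸ h2) (le_delta hlt hmono β hβ)

/-- The set of closure points of `δ ↦ δ + f δ` (with `f` truncated above `κ.ord`). -/
def clS (κ : Cardinal) (f : Ordinal → Ordinal) : Set Ordinal :=
  {α | ∀ δ < α, δ + (if δ < κ.ord then f δ else 0) < α}

section clS

variable (hreg : κ.IsRegular) (hunc : ℵ₀ < κ) {f : Ordinal → Ordinal}
  (hf : ∀ α < κ.ord, f α < κ.ord)

include hreg hf in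
lemma Ici_subset_clS : Ici κ.ord ⊆ clS κ f := by
  intro α hα δ hδ
  by_cases h : δ < κ.ord
  · rw [if_pos h]
    exact lt_of_lt_of_le (aux_add_lt hreg.aleph0_le h (hf δ h)) hα
  · rw [if_neg h, add_zero]
    exact hδ

include hreg hf in
lemma clS_not_bddAbove : ¬ BddAbove (clS κ f) := by
  rintro ⟨b, hb⟩
  have h1 : max b κ.ord + 1 ∈ clS κ f :=
    Ici_subset_clS hreg hf
      (le_of_lt (lt_of_le_of_lt (le_max_right b κ.ord) (Order.lt_succ (max b κ.ord))))
  have := hb h1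
  have h2 : b < max b κ.ord + 1 := lt_of_le_of_lt (le_max_left _ _) (Order.lt_succ _)
  exact absurd this (not_le.2 h2)

lemma clS_isClosed : IsClosed (clS κ f) := by
  rw [Ordinal.isClosed_iff_iSup]
  rintro ι hι g hg
  intro δ hδ
  rw [Ordinal.lt_iSup_iff] at hδ
  obtain ⟨i, hi⟩ := hδ
  exact lt_of_lt_of_le (hg i δ hi) (le_ciSup (Ordinal.bddAbove_range g) i)

include hreg hunc hf in
lemma clS_unbounded_below : ∀ β < κ.ord, ∃ α ∈ clS κ f, β < α ∧ α < κ.ord := by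
  intro β hβ
  have hord : Order.IsSuccLimit κ.ord := Cardinal.isSuccLimit_ord hreg.aleph0_le
  set f' : Ordinal → Ordinal := fun δ => if δ < κ.ord then f δ else 0 with hf'
  have hf'κ : ∀ δ < κ.ord, δ + f' δ + 1 < κ.ord := by
    intro δ hδ
    simp only [hf', if_pos hδ]
    exact hord.succ_lt (aux_add_lt hreg.aleph0_le hδ (hf δ hδ))
  set h : Ordinal → Ordinal := fun x => Ordinal.bsup (x + 1) (fun δ _ => δ + f' δ + 1) with hh
  have hhκ : ∀ x < κ.ord, h x < κ.ord := by
    intro x hx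
    apply Ordinal.bsup_lt_ord
    · rw [hreg.cof_eq]
      exact Cardinal.lt_ord.1 (hord.succ_lt hx)
    · intro δ hδ
      exact hf'κ δ (lt_of_le_of_lt (Order.le_of_lt_succ hδ) hx)
  have hle : ∀ x δ, δ ≤ x → δ + f' δ + 1 ≤ h x := by
    intro x δ hδ
    exact Ordinal.le_bsup (fun δ _ => δ + f' δ + 1) δ (Order.lt_succ_of_le hδ)
  have hlt : ∀ x, x < h x := fun x =>
    lt_of_lt_of_le (lt_of_le_of_lt (le_self_add : x ≤ x + f' x) (Order.lt_succ _))
      (hle x x le_rfl)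
  set a : ℕ → Ordinal := fun n => Nat.rec (β + 1) (fun _ x => h x) n with ha
  have haκ : ∀ n, a n < κ.ord := by
    intro n
    induction n with
    | zero => exact hord.succ_lt hβ
    | succ n ih => exact hhκ _ ih
  have hbdd : BddAbove (range a) := ⟨κ.ord, by rintro x ⟨n, rfl⟩; exact (haκ n).le⟩
  set α : Ordinal := ⨆ n, a n with hα
  have hlea : ∀ n, a n ≤ α := fun n => le_ciSup hbdd n
  refine ⟨α, ?_, lt_of_lt_of_le (Order.lt_succ β) (hlea 0), aux_natSup_lt hreg hunc haκ⟩
  intro δ hδ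
  rw [hα, Ordinal.lt_iSup_iff] at hδ
  obtain ⟨n, hn⟩ := hδ
  have h1 : δ + f' δ + 1 ≤ h (a n) := hle (a n) δ hn.le
  have h2 : h (a n) = a (n + 1) := rfl
  calc δ + f' δ < δ + f' δ + 1 := Order.lt_succ _
    _ ≤ a (n + 1) := h2 ▸ h1
    _ ≤ α := hlea (n + 1)

include hreg hunc hf in
lemma enumOrd_clS_lt : ∀ ξ < κ.ord, Ordinal.enumOrd (clS κ f) ξ < κ.ord := by
  have hub := clS_not_bddAbove hreg hf
  intro ξ
  induction ξ using Ordinal.induction with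
  | h ξ IH =>
    intro hξ
    have hγ : Ordinal.bsup ξ (fun ζ _ => Ordinal.enumOrd (clS κ f) ζ) < κ.ord := by
      apply Ordinal.bsup_lt_ord
      · rw [hreg.cof_eq]; exact Cardinal.lt_ord.1 hξ
      · intro ζ hζ; exact IH ζ hζ (lt_trans hζ hξ)
    obtain ⟨α, hαS, hγα, hακ⟩ := clS_unbounded_below hreg hunc hf _ hγ
    have : Ordinal.enumOrd (clS κ f) ξ ≤ α := by
      apply Ordinal.enumOrd_le_of_forall_lt hαS
      intro ζ hζ
      exact lt_of_le_of_lt (Ordinal.le_bsup _ ζ hζ) hγα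
    exact lt_of_le_of_lt this hακ

end clS

lemma image_club {δs : Ordinal → Ordinal}
    (hlt : ∀ ξ < κ.ord, δs ξ < κ.ord)
    (hmonoS : StrictMono δs)
    (hcont : ∀ ξ < κ.ord, Order.IsSuccLimit ξ → δs ξ = sSup (δs '' Iio ξ))
    (hid : ∀ ξ, ξ ≤ δs ξ)
    {Cs : Set Ordinal} (hCs : IsClubIn Cs κ.ord) :
    IsClubIn (δs '' Cs) κ.ord := by
  refine ⟨?_, ?_, ?_⟩
  · rintro x ⟨ξ, hξ, rfl⟩
    exact hlt ξ (hCs.1 hξ)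
  · intro β hβ
    obtain ⟨ξ, hξCs, hβξ⟩ := hCs.2.1 β hβ
    exact ⟨δs ξ, ⟨ξ, hξCs, rfl⟩, lt_of_lt_of_le hβξ (hid ξ)⟩
  · intro β hβ hβ0 hsup
    set T : Set Ordinal := {ξ | ξ ∈ Cs ∧ δs ξ < β} with hT
    have hTne : T.Nonempty := by
      obtain ⟨e, ⟨⟨ξ, hξCs, rfl⟩, heβ⟩, -⟩ :=
        exists_between_of_sSup hβ0 hsup (pos_iff_ne_zero.2 hβ0)
      exact ⟨ξ, hξCs, heβ⟩
    have hTbdd : BddAbove T := ⟨β, fun ξ hξ => (lt_of_le_of_lt (hid ξ) hξ.2).le⟩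
    set ξs : Ordinal := sSup T with hξs
    have hξsβ : ξs ≤ β := csSup_le hTne (fun ξ hξ => (lt_of_le_of_lt (hid ξ) hξ.2).le)
    have hξsκ : ξs < κ.ord := lt_of_le_of_lt hξsβ hβ
    have hge : β ≤ δs ξs := by
      by_contra h
      push_neg at h
      obtain ⟨e, ⟨⟨ξ, hξCs, rfl⟩, heβ⟩, hlte⟩ := exists_between_of_sSup hβ0 hsup h
      have h1 : ξ ≤ ξs := le_csSup hTbdd ⟨hξCs, heβ⟩
      exact absurd (hmonoS.monotone h1) (not_le.2 hlte)
    have hTsub : T ⊆ Cs ∩ Iio ξs := by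
      intro ξ hξ
      refine ⟨hξ.1, lt_of_le_of_ne (le_csSup hTbdd hξ) ?_⟩
      rintro rfl
      exact absurd hξ.2 (not_lt.2 hge)
    have hξs0 : ξs ≠ 0 := by
      intro h
      obtain ⟨ξ, hξ⟩ := hTne
      have := (hTsub hξ).2
      rw [h] at this
      exact absurd this (by simp)
    have hfind : ∀ ζ < ξs, ∃ ξ ∈ T, ζ < ξ := fun ζ hζ => exists_lt_of_lt_csSup hTne hζ
    have hlim : Order.IsSuccLimit ξs := by
      refine Ordinal.isSuccLimit_iff.2 ⟨hξs0, Order.isSuccPrelimit_of_succ_lt fun ζ hζ => ?_⟩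
      obtain ⟨ξ, hξT, hζξ⟩ := hfind ζ hζ
      exact lt_of_le_of_lt (Order.succ_le_of_lt hζξ) (hTsub hξT).2
    have hδeq : δs ξs = β := by
      refine le_antisymm ?_ hge
      rw [hcont ξs hξsκ hlim]
      refine csSup_le ?_ ?_
      · exact Set.Nonempty.image δs ⟨0, hlim.pos⟩
      rintro x ⟨ζ, hζ, rfl⟩
      obtain ⟨ξ, hξT, hζξ⟩ := hfind ζ hζ
      exact (lt_trans (hmonoS hζξ) hξT.2).le
    have hmem : ξs ∈ Cs := by
      apply hCs.2.2 ξs hξsκ hξs0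
      refine le_antisymm ?_ ?_
      · apply csSup_le ⟨_, hTsub hTne.choose_spec⟩
        exact fun x hx => hx.2.le
      · calc ξs = sSup T := rfl
          _ ≤ sSup (Cs ∩ Iio ξs) :=
            csSup_le_csSup ⟨ξs, fun x hx => hx.2.le⟩ hTne hTsub
    exact ⟨ξs, hmem, hδeq⟩

end Statement5Aux

/-- A uniform ultrafilter `D` on `λ` is weakly reasonable iff for every increasing
continuous sequence `⟨δ_ξ : ξ < λ⟩ ⊆ λ` there is a club `C*` of `λ` with
`⋃ { [δ_ξ, δ_{ξ+1}) : ξ ∈ C* } ∉ D`. -/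
theorem statement5 (κ : Cardinal.{0}) (hreg : κ.IsRegular) (hunc : Cardinal.aleph0 < κ)
    (D : Set (Set Ordinal)) (hD : IsUltrafilterOn (Iio κ.ord) D)
    (huni : ∀ A ∈ D, Cardinal.mk ↥A = Cardinal.lift.{1,0} κ) :
    (∀ f : Ordinal → Ordinal, (∀ α < κ.ord, f α < κ.ord) →
        ∃ C : Set Ordinal, IsClubIn C κ.ord ∧ (⋃ δ ∈ C, Ico δ (δ + f δ)) ∉ D)
    ↔
    (∀ δs : Ordinal → Ordinal, (∀ ξ < κ.ord, δs ξ < κ.ord) →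
        (∀ ξ ζ : Ordinal, ξ < ζ → ζ < κ.ord → δs ξ < δs ζ) →
        (∀ ξ < κ.ord, Order.IsSuccLimit ξ → δs ξ = sSup (δs '' Iio ξ)) →
        ∃ Cs : Set Ordinal, IsClubIn Cs κ.ord ∧
          (⋃ ξ ∈ Cs, Ico (δs ξ) (δs (ξ + 1))) ∉ D) := by
  have hord : Order.IsSuccLimit κ.ord := Cardinal.isSuccLimit_ord hreg.aleph0_le
  have hnotm : ∀ B U : Set Ordinal, B ⊆ U → U ⊆ Iio κ.ord → U ∉ D → B ∉ D :=
    fun B U hsub hU hUD hB => hUD (hD.2.2.2.1 B U hB hsub hU)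
  constructor
  · -- weakly reasonable implies the sequence formulation
    intro wr δs hlt hmono hcont
    obtain ⟨C, hC, hCD⟩ := wr (fun α => δs (α + 1)) (fun α hα => hlt _ (hord.succ_lt hα))
    have hE := Statement5Aux.fixed_club hreg hunc hlt hmono hcont
    refine ⟨C ∩ {ξ | ξ < κ.ord ∧ δs ξ = ξ},
      Statement5Aux.isClubIn_inter hreg hunc hC hE, ?_⟩
    refine hnotm _ _ ?_ ?_ hCD
    · intro x hx
      simp only [mem_iUnion, exists_prop] at hx ⊢
      obtain ⟨ξ, ⟨hξC, _, hfix⟩, hx⟩ := hx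
      refine ⟨ξ, hξC, ?_⟩
      rw [hfix] at hx
      exact ⟨hx.1, lt_of_lt_of_le hx.2 le_add_self⟩
    · intro x hx
      simp only [mem_iUnion, exists_prop] at hx
      obtain ⟨δ, hδC, hx⟩ := hx
      have hδκ : δ < κ.ord := hC.1 hδC
      exact lt_of_lt_of_le hx.2
        (le_of_lt (Statement5Aux.aux_add_lt hreg.aleph0_le hδκ (hlt _ (hord.succ_lt hδκ))))
  · -- the sequence formulation implies weakly reasonable
    intro hseq f hf
    have hub := Statement5Aux.clS_not_bddAbove hreg hf
    have hnorm : Order.IsNormal (Ordinal.enumOrd (Statement5Aux.clS κ f)) :=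
      (Ordinal.enumOrd_isNormal_iff_isClosed hub).2 Statement5Aux.clS_isClosed
    set δs : Ordinal → Ordinal := Ordinal.enumOrd (Statement5Aux.clS κ f) with hδs
    have hsm : StrictMono δs := Ordinal.enumOrd_strictMono hub
    have hlt : ∀ ξ < κ.ord, δs ξ < κ.ord := Statement5Aux.enumOrd_clS_lt hreg hunc hf
    have hmono : ∀ ξ ζ : Ordinal, ξ < ζ → ζ < κ.ord → δs ξ < δs ζ :=
      fun ξ ζ h _ => hsm h
    have hcont : ∀ ξ < κ.ord, Order.IsSuccLimit ξ → δs ξ = sSup (δs '' Iio ξ) := by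
      intro ξ _ hlim
      conv_lhs => rw [← hlim.sSup_Iio]
      exact hnorm.map_sSup ⟨0, hlim.pos⟩ ⟨ξ, fun x hx => hx.le⟩
    obtain ⟨Cs, hCs, hCsD⟩ := hseq δs hlt hmono hcont
    refine ⟨δs '' Cs,
      Statement5Aux.image_club hlt hsm hcont (fun ξ => hsm.le_apply) hCs, ?_⟩
    refine hnotm _ _ ?_ ?_ hCsD
    · intro x hx
      simp only [mem_iUnion, exists_prop] at hx ⊢
      obtain ⟨δ, ⟨ξ, hξCs, rfl⟩, hx⟩ := hx
      refine ⟨ξ, hξCs, hx.1, ?_⟩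
      have hmem : δs (ξ + 1) ∈ Statement5Aux.clS κ f :=
        Ordinal.enumOrd_mem hub (ξ + 1)
      have h1 : δs ξ < δs (ξ + 1) := hsm (Order.lt_succ ξ)
      have h2 := hmem (δs ξ) h1
      rw [if_pos (hlt ξ (hCs.1 hξCs))] at h2
      exact lt_trans hx.2 h2
    · intro x hx
      simp only [mem_iUnion, exists_prop] at hx
      obtain ⟨ξ, hξCs, hx⟩ := hx
      have hξκ : ξ < κ.ord := hCs.1 hξCs
      exact lt_trans hx.2 (hlt _ (hord.succ_lt hξκ))
end
end

section
/- For r, s ∈ Q*_λ: r ≤* s (i.e., fil*(r) ⊆ fil*(s)) if and only if there is ε < λ such that for every (α,Z,d) ∈ s with α > ε and every A ∈ d, there exists (α',Z',d') ∈ r with A ∩ Z' ∈ d'. -/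
open Set

noncomputable section

/-- `r ∈ Q*_λ`: a family of triples `(α, Z, d)` with `α < λ`, `Z ⊆ [α, λ)` infinite of
size `< λ`, `d` a non-principal ultrafilter on `Z`, only `< λ` triples per first
coordinate, and `|r| = λ`. -/
def IsQStar (κ : Cardinal.{0}) (r : Set (Ordinal × Set Ordinal × Set (Set Ordinal))) : Prop :=
  (∀ t ∈ r, t.1 < κ.ord ∧ t.2.1 ⊆ Ico t.1 κ.ord ∧
      Cardinal.aleph0 ≤ Cardinal.mk ↥t.2.1 ∧ Cardinal.mk ↥t.2.1 < Cardinal.lift.{1,0} κ ∧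
      IsNonprincipalOn t.2.1 t.2.2) ∧
  (∀ ξ < κ.ord, Cardinal.mk ↥{t | t ∈ r ∧ t.1 = ξ} < Cardinal.lift.{1,0} κ) ∧
  Cardinal.mk ↥r = Cardinal.lift.{1,0} κ

def filStar (κ : Cardinal.{0}) (r : Set (Ordinal × Set Ordinal × Set (Set Ordinal))) :
    Set (Set Ordinal) :=
  {A | A ⊆ Iio κ.ord ∧ ∃ ε < κ.ord, ∀ t ∈ r, ε ≤ t.1 → A ∩ t.2.1 ∈ t.2.2}

def StronglyDisjoint (r : Set (Ordinal × Set Ordinal × Set (Set Ordinal))) : Prop :=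
  (∀ t₁ ∈ r, ∀ t₂ ∈ r, t₁.1 = t₂.1 → t₁ = t₂) ∧
  (∀ t₁ ∈ r, ∀ t₂ ∈ r, t₁.1 < t₂.1 → t₁.2.1 ⊆ Iio t₂.1)

/-- `#(p) = { (α, Z^p_α, d^p_α) : α ∈ C^p }`. -/
def hashQ {lam : Ordinal} (p : QZero lam) : Set (Ordinal × Set Ordinal × Set (Set Ordinal)) :=
  {t | ∃ α ∈ p.C, t = (α, p.Z α, p.d α)}

section Statement8Aux

open Cardinal in
lemma s8_lift_isRegular {κ : Cardinal.{0}} (h : κ.IsRegular) :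
    (Cardinal.lift.{1,0} κ).IsRegular := by
  constructor
  · rw [← Cardinal.lift_aleph0.{1,0}]
    exact Cardinal.lift_le.2 h.aleph0_le
  · rw [← Cardinal.lift_ord, ← Ordinal.lift_cof, h.cof_eq]

lemma s8_bounded_of_mk_lt {κ : Cardinal.{0}} (hreg : κ.IsRegular) {U : Set Ordinal}
    (hU : U ⊆ Iio κ.ord) (hcard : Cardinal.mk ↥U < Cardinal.lift.{1,0} κ) :
    ∃ b < κ.ord, U ⊆ Iio b := by
  obtain ⟨μ, hμlt, hμeq⟩ := Cardinal.lt_lift_iff.1 hcard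
  have hmk : Cardinal.lift.{0,1} (Cardinal.mk ↥U) = Cardinal.lift.{1,0} (Cardinal.mk μ.out) := by
    rw [Cardinal.mk_out, Cardinal.lift_id', hμeq]
  obtain ⟨g⟩ := Cardinal.lift_mk_eq'.1 hmk
  set f : μ.out → Ordinal := fun x => ((g.symm x : ↥U) : Ordinal) with hf
  have hflt : ∀ x, f x < κ.ord := fun x => hU (g.symm x).2
  have hsup : iSup f < κ.ord := by
    apply Ordinal.iSup_lt_ord _ hflt
    rwa [Cardinal.mk_out, hreg.cof_eq]
  refine ⟨iSup f + 1, ?_, fun u hu => ?_⟩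
  · rw [Ordinal.add_one_eq_succ]
    exact (Cardinal.isSuccLimit_ord hreg.aleph0_le).succ_lt hsup
  · have hu2 : u = f (g ⟨u, hu⟩) := by simp [hf]
    have : u ≤ iSup f := hu2 ▸ le_ciSup (Ordinal.bddAbove_range f) _
    rw [mem_Iio, Ordinal.add_one_eq_succ, Order.lt_succ_iff]
    exact this

lemma s8_mk_sel_lt {κ : Cardinal.{0}} (hreg : κ.IsRegular)
    {r : Set (Ordinal × Set Ordinal × Set (Set Ordinal))}
    (h2 : ∀ ξ < κ.ord, Cardinal.mk ↥{t | t ∈ r ∧ t.1 = ξ} < Cardinal.lift.{1,0} κ)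
    {e : Ordinal} (he : e < κ.ord) :
    Cardinal.mk ↥{t | t ∈ r ∧ t.1 < e} < Cardinal.lift.{1,0} κ := by
  have hU : {t | t ∈ r ∧ t.1 < e} = ⋃ ξ ∈ Iio e, {t | t ∈ r ∧ t.1 = ξ} := by
    ext t
    simp only [mem_setOf_eq, mem_iUnion, mem_Iio, exists_prop]
    constructor
    · rintro ⟨h1, hlt⟩; exact ⟨t.1, hlt, h1, rfl⟩
    · rintro ⟨ξ, hξ, h1, hq⟩; exact ⟨h1, hq ▸ hξ⟩
  rw [hU]
  rw [Cardinal.card_biUnion_lt_iff_forall_of_isRegular (s8_lift_isRegular hreg) ?hs]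
  · exact fun ξ hξ => h2 ξ (lt_trans hξ he)
  case hs => rw [Ordinal.mk_Iio_ordinal]; exact Cardinal.lift_lt.2 (Cardinal.lt_ord.1 he)

lemma s8_boundR {κ : Cardinal.{0}} (hreg : κ.IsRegular)
    {r : Set (Ordinal × Set Ordinal × Set (Set Ordinal))} (hr : IsQStar κ r)
    {e : Ordinal} (he : e < κ.ord) :
    ∃ b < κ.ord, ∀ t' ∈ r, t'.1 < e → t'.2.1 ⊆ Iio b := by
  have hScard := s8_mk_sel_lt hreg hr.2.1 he
  have hUsub : (⋃ t' ∈ {t | t ∈ r ∧ t.1 < e}, t'.2.1) ⊆ Iio κ.ord := by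
    intro z hz
    simp only [mem_iUnion, mem_setOf_eq, exists_prop] at hz
    obtain ⟨t', ht', hzt⟩ := hz
    exact ((hr.1 t' ht'.1).2.1 hzt).2
  have hUcard : Cardinal.mk ↥(⋃ t' ∈ {t | t ∈ r ∧ t.1 < e}, t'.2.1) < Cardinal.lift.{1,0} κ := by
    rw [Cardinal.card_biUnion_lt_iff_forall_of_isRegular (s8_lift_isRegular hreg) hScard]
    exact fun t' ht' => (hr.1 t' ht'.1).2.2.2.1
  obtain ⟨b, hb, hUb⟩ := s8_bounded_of_mk_lt hreg hUsub hUcard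
  exact ⟨b, hb, fun t' ht' hlt z hz => hUb (mem_biUnion (⟨ht', hlt⟩ : _ ∧ _) hz)⟩

def s8_epsIter (Φ : Ordinal.{0} → Ordinal.{0}) : Ordinal.{0} → Ordinal.{0}
  | i => Ordinal.bsup.{0,0} i fun j _ => Φ (s8_epsIter Φ j)
  termination_by i => i
  decreasing_by assumption

lemma s8_epsIter_eq (Φ : Ordinal.{0} → Ordinal.{0}) (i : Ordinal) :
    s8_epsIter Φ i = Ordinal.bsup.{0,0} i fun j _ => Φ (s8_epsIter Φ j) := by
  rw [s8_epsIter]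

lemma s8_epsIter_mono (Φ : Ordinal.{0} → Ordinal.{0}) : Monotone (s8_epsIter Φ) := by
  intro i i' h
  rw [s8_epsIter_eq Φ i]
  refine Ordinal.bsup_le_iff.2 fun j hj => ?_
  rw [s8_epsIter_eq Φ i']
  exact Ordinal.le_bsup _ j (lt_of_lt_of_le hj h)

lemma s8_epsIter_succ_le (Φ : Ordinal.{0} → Ordinal.{0}) (i : Ordinal) :
    Φ (s8_epsIter Φ i) ≤ s8_epsIter Φ (i + 1) := by
  rw [s8_epsIter_eq Φ (i + 1)]
  exact Ordinal.le_bsup _ i (by rw [Ordinal.add_one_eq_succ]; exact Order.lt_succ i)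

lemma s8_epsIter_lt {κ : Cardinal.{0}} (hreg : κ.IsRegular) (Φ : Ordinal.{0} → Ordinal.{0})
    (hΦ : ∀ e < κ.ord, Φ e < κ.ord) : ∀ i < κ.ord, s8_epsIter Φ i < κ.ord := by
  intro i
  induction i using Ordinal.induction with
  | h i IH =>
    intro hi
    rw [s8_epsIter_eq]
    apply Ordinal.bsup_lt_ord _ fun j hj => hΦ _ (IH j hj (lt_trans hj hi))
    rw [hreg.cof_eq]
    exact Cardinal.lt_ord.1 hi

lemma s8_self_le_epsIter (Φ : Ordinal.{0} → Ordinal.{0}) (hΦgt : ∀ e, e < Φ e) :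
    ∀ i, i ≤ s8_epsIter Φ i := by
  intro i
  induction i using Ordinal.induction with
  | h i IH =>
    by_contra hlt
    push_neg at hlt
    have h1 : ∀ j, j < i → j < s8_epsIter Φ i := by
      intro j hj
      refine lt_of_le_of_lt (IH j hj) (lt_of_lt_of_le (hΦgt (s8_epsIter Φ j)) ?_)
      rw [s8_epsIter_eq Φ i]
      exact Ordinal.le_bsup (fun j _ => Φ (s8_epsIter Φ j)) j hj
    exact absurd (h1 _ hlt) (lt_irrefl _)

end Statement8Aux

/-- For `r, s ∈ Q*_λ`: `fil*(r) ⊆ fil*(s)` iff there is `ε < λ` such that for every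
`(α,Z,d) ∈ s` with `α > ε` and every `A ∈ d` there is `(α',Z',d') ∈ r` with `A ∩ Z' ∈ d'`. -/
theorem statement8 (κ : Cardinal.{0}) (hreg : κ.IsRegular) (hunc : Cardinal.aleph0 < κ)
    (r s : Set (Ordinal × Set Ordinal × Set (Set Ordinal)))
    (hr : IsQStar κ r) (hs : IsQStar κ s) :
    filStar κ r ⊆ filStar κ s ↔
      ∃ ε < κ.ord, ∀ t ∈ s, ε < t.1 → ∀ A ∈ t.2.2, ∃ t' ∈ r, A ∩ t'.2.1 ∈ t'.2.2 := by
  have hlam0 : (0 : Ordinal) < κ.ord := hreg.ord_pos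
  have hlim : Order.IsSuccLimit κ.ord := Cardinal.isSuccLimit_ord hreg.aleph0_le
  have hsucclt : ∀ a < κ.ord, a + 1 < κ.ord := by
    intro a ha; rw [Ordinal.add_one_eq_succ]; exact hlim.succ_lt ha
  have hself : ∀ a : Ordinal, a < a + 1 := by
    intro a; rw [Ordinal.add_one_eq_succ]; exact Order.lt_succ a
  constructor
  · -- forward direction
    intro hsub
    by_contra hno
    push_neg at hno
    -- hno : ∀ ε < κ.ord, ∃ t ∈ s, ε < t.1 ∧ ∃ A ∈ t.2.2, ∀ t' ∈ r, A ∩ t'.2.1 ∉ t'.2.2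
    have key : ∀ e : Ordinal, ∃ (b : Ordinal) (t : Ordinal × Set Ordinal × Set (Set Ordinal))
        (A : Set Ordinal), e < b ∧ (e < κ.ord → b < κ.ord ∧
          (∀ t' ∈ r, t'.1 < e → t'.2.1 ⊆ Iio b) ∧
          t ∈ s ∧ e < t.1 ∧ A ∈ t.2.2 ∧ (∀ t' ∈ r, A ∩ t'.2.1 ∉ t'.2.2) ∧ A ⊆ Iio b) := by
      intro e
      by_cases he : e < κ.ord
      · obtain ⟨t, hts, htgt, A, hA, hbad⟩ := hno e he
        obtain ⟨b₁, hb₁, hZb₁⟩ := s8_boundR hreg hr he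
        have hAZ : A ⊆ t.2.1 := ((hs.1 t hts).2.2.2.2.1).1 A hA
        obtain ⟨b₂, hb₂, hZb₂⟩ := s8_bounded_of_mk_lt hreg
          (fun z hz => ((hs.1 t hts).2.1 hz).2) (hs.1 t hts).2.2.2.1
        refine ⟨max (max b₁ b₂) (e + 1), t, A, ?_, fun _ => ⟨?_, ?_, hts, htgt, hA, hbad, ?_⟩⟩
        · exact lt_of_lt_of_le (hself e) (le_max_right _ _)
        · exact max_lt (max_lt hb₁ hb₂) (hsucclt e he)
        · exact fun t' ht' hlt =>
            subset_trans (hZb₁ t' ht' hlt)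
              (Iio_subset_Iio ((le_max_left b₁ b₂).trans (le_max_left _ _)))
        · exact subset_trans (subset_trans hAZ hZb₂)
            (Iio_subset_Iio ((le_max_right b₁ b₂).trans (le_max_left _ _)))
      · exact ⟨e + 1, ⟨0, ∅, ∅⟩, ∅, hself e, fun h => absurd h he⟩
    choose Φ T 𝒜 hΦgt hΦ using key
    set E := s8_epsIter Φ with hE
    have hElam : ∀ i < κ.ord, E i < κ.ord :=
      s8_epsIter_lt hreg Φ (fun e he => (hΦ e he).1)
    have hEmono := s8_epsIter_mono Φ
    have hEself := s8_self_le_epsIter Φ hΦgt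
    have hEsucc : ∀ i, Φ (E i) ≤ E (i + 1) := s8_epsIter_succ_le Φ
    set X := Iio κ.ord \ ⋃ i ∈ Iio κ.ord, 𝒜 (E i) with hX
    have hfacts : ∀ i < κ.ord, T (E i) ∈ s ∧ E i < (T (E i)).1 ∧ 𝒜 (E i) ∈ (T (E i)).2.2 ∧
        (∀ t' ∈ r, 𝒜 (E i) ∩ t'.2.1 ∉ t'.2.2) ∧ 𝒜 (E i) ⊆ Iio (Φ (E i)) := by
      intro i hi
      have h := hΦ (E i) (hElam i hi)
      exact ⟨h.2.2.1, h.2.2.2.1, h.2.2.2.2.1, h.2.2.2.2.2.1, h.2.2.2.2.2.2⟩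
    have hAlow : ∀ i < κ.ord, 𝒜 (E i) ⊆ Ico (T (E i)).1 κ.ord := by
      intro i hi
      have h := hfacts i hi
      exact subset_trans (((hs.1 _ h.1).2.2.2.2.1).1 _ h.2.2.1) (hs.1 _ h.1).2.1
    have hXr : X ∈ filStar κ r := by
      refine ⟨diff_subset, 0, hlam0, fun t' ht' _ => ?_⟩
      have h1 := hr.1 t' ht'
      have hne : {i : Ordinal | t'.1 < E i}.Nonempty :=
        ⟨t'.1 + 1, lt_of_lt_of_le (hself t'.1) (hEself (t'.1 + 1))⟩
      set m := sInf {i : Ordinal | t'.1 < E i} with hm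
      have hm1 : t'.1 < E m := csInf_mem hne
      have hm2 : ∀ j, j < m → E j ≤ t'.1 := by
        intro j hj
        by_contra hcon
        push_neg at hcon
        have hmem : j ∈ {i : Ordinal | t'.1 < E i} := hcon
        exact absurd hj (not_lt.2 (csInf_le (OrderBot.bddBelow _) hmem))
      have hmlt : m < κ.ord := by
        have hmem : t'.1 + 1 ∈ {i : Ordinal | t'.1 < E i} :=
          lt_of_lt_of_le (hself t'.1) (hEself (t'.1 + 1))
        exact lt_of_le_of_lt (csInf_le (OrderBot.bddBelow _) hmem) (hsucclt _ h1.1)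
      have hZup : t'.2.1 ⊆ Iio (Φ (E m)) := (hΦ (E m) (hElam m hmlt)).2.1 t' ht' hm1
      have hkey : ∀ j < κ.ord, ∀ z, z ∈ 𝒜 (E j) → z ∈ t'.2.1 → j = m ∨ j + 1 = m := by
        intro j hj z hzA hzZ
        have hz1 : E j < z := lt_of_lt_of_le (hfacts j hj).2.1 (hAlow j hj hzA).1
        have hz2 : z < Φ (E j) := (hfacts j hj).2.2.2.2 hzA
        have hzα : t'.1 ≤ z := (h1.2.1 hzZ).1
        have hmj : m ≤ j + 1 := by
          by_contra hcon
          push_neg at hcon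
          have h3 := hm2 (j + 1) hcon
          exact absurd (lt_of_le_of_lt hzα (lt_of_lt_of_le hz2 ((hEsucc j).trans h3)))
            (lt_irrefl _)
        have hjm : j ≤ m := by
          by_contra hcon
          push_neg at hcon
          have h5 : z < Φ (E m) := hZup hzZ
          have h7 : E (m + 1) ≤ E j := hEmono
            (by rw [Ordinal.add_one_eq_succ]; exact Order.succ_le_of_lt hcon)
          exact absurd (lt_trans hz1 (lt_of_lt_of_le h5 ((hEsucc m).trans h7))) (lt_irrefl _)
        rcases eq_or_lt_of_le hjm with h | h
        · exact Or.inl h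
        · exact Or.inr (le_antisymm
            (by rw [Ordinal.add_one_eq_succ]; exact Order.succ_le_of_lt h) hmj)
      obtain ⟨p, hplt, hp⟩ : ∃ p, p < κ.ord ∧
          ∀ j < κ.ord, ∀ z, z ∈ 𝒜 (E j) → z ∈ t'.2.1 → j = m ∨ j = p := by
        by_cases hqm : ∃ q : Ordinal, q + 1 = m
        · obtain ⟨q, hq⟩ := hqm
          refine ⟨q, lt_trans (hq ▸ hself q) hmlt, fun j hj z hz1 hz2 => ?_⟩
          rcases hkey j hj z hz1 hz2 with h | h
          · exact Or.inl h
          · refine Or.inr ?_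
            have : j + 1 = q + 1 := h.trans hq.symm
            rw [Ordinal.add_one_eq_succ, Ordinal.add_one_eq_succ] at this
            exact Order.succ_eq_succ_iff.1 this
        · exact ⟨m, hmlt, fun j hj z hz1 hz2 =>
            (hkey j hj z hz1 hz2).imp id (fun h => absurd ⟨j, h⟩ hqm)⟩
      obtain ⟨⟨hd1, hd2, hd3, hd4, hd5, hd6⟩, hd7⟩ := h1.2.2.2.2
      have hcompl : ∀ i < κ.ord, t'.2.1 \ 𝒜 (E i) ∈ t'.2.2 := by
        intro i hi
        have hb := (hfacts i hi).2.2.2.1 t' ht'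
        rcases hd6 (𝒜 (E i) ∩ t'.2.1) inter_subset_right with h | h
        · exact absurd h hb
        · rwa [diff_inter_self_eq_diff] at h
      have hint := hd5 _ _ (hcompl m hmlt) (hcompl p hplt)
      refine hd4 _ _ hint ?_ inter_subset_right
      rintro z ⟨⟨hz1, hz2⟩, ⟨-, hz4⟩⟩
      refine ⟨⟨(h1.2.1 hz1).2, ?_⟩, hz1⟩
      intro hzU
      simp only [mem_iUnion, mem_Iio, exists_prop] at hzU
      obtain ⟨j, hj, hzA⟩ := hzU
      rcases hp j hj z hzA hz1 with rfl | rfl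
      · exact hz2 hzA
      · exact hz4 hzA
    obtain ⟨-, ε', hε', hXs⟩ := hsub hXr
    have hf := hfacts ε' hε'
    have h1 : X ∩ (T (E ε')).2.1 ∈ (T (E ε')).2.2 :=
      hXs _ hf.1 (le_trans (hEself ε') (le_of_lt hf.2.1))
    obtain ⟨⟨he1, he2, he3, he4, he5, he6⟩, -⟩ := (hs.1 _ hf.1).2.2.2.2
    have h2 := he5 _ _ h1 hf.2.2.1
    have h3 : (X ∩ (T (E ε')).2.1) ∩ 𝒜 (E ε') = ∅ := by
      ext z
      simp only [mem_inter_iff, mem_empty_iff_false, iff_false, not_and]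
      rintro ⟨hzX, -⟩ hzA
      exact hzX.2 (mem_biUnion hε' hzA)
    rw [h3] at h2
    exact he3 h2
  · -- backward direction
    rintro ⟨ε, hε, hP⟩ A ⟨hA1, ε₀, hε₀, hA⟩
    obtain ⟨b, hb, hZb⟩ := s8_boundR hreg hr hε₀
    refine ⟨hA1, max b (ε + 1), max_lt hb (hsucclt ε hε), fun t hts h1 => ?_⟩
    have hst := hs.1 t hts
    obtain ⟨⟨he1, he2, he3, he4, he5, he6⟩, -⟩ := hst.2.2.2.2
    by_contra hnot
    have hBmem : t.2.1 \ A ∈ t.2.2 := by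
      rcases he6 (A ∩ t.2.1) inter_subset_right with h | h
      · exact absurd h hnot
      · rwa [diff_inter_self_eq_diff] at h
    have hεt : ε < t.1 :=
      lt_of_lt_of_le (lt_of_lt_of_le (hself ε) (le_max_right b (ε + 1))) h1
    obtain ⟨t', ht'r, hBZ⟩ := hP t hts hεt _ hBmem
    have h2 := hr.1 t' ht'r
    obtain ⟨⟨hf1, hf2, hf3, hf4, hf5, hf6⟩, -⟩ := h2.2.2.2.2
    have hne : ((t.2.1 \ A) ∩ t'.2.1).Nonempty :=
      nonempty_iff_ne_empty.2 (fun h => hf3 (h ▸ hBZ))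
    obtain ⟨z, hz1, hz2⟩ := hne
    have hzb : b ≤ z :=
      le_trans (le_trans (le_max_left _ _) h1) (hst.2.1 hz1.1).1
    have ht'ge : ε₀ ≤ t'.1 := by
      by_contra hcon
      push_neg at hcon
      exact absurd (hZb t' ht'r hcon hz2) (not_lt.2 hzb)
    have h4 := hf5 _ _ (hA t' ht'r ht'ge) hBZ
    have h5 : (A ∩ t'.2.1) ∩ ((t.2.1 \ A) ∩ t'.2.1) = ∅ := by
      ext w
      simp only [mem_inter_iff, mem_diff, mem_empty_iff_false, iff_false]
      rintro ⟨⟨hw1, -⟩, ⟨-, hw2⟩, -⟩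
      exact hw2 hw1
    rw [h5] at h4
    exact hf3 h4
end
end

section
/- The forcing notion P* is (<λ)-complete: every ≤-increasing sequence ⟨p_ξ : ξ < δ⟩ of conditions in P*, with δ < λ, has an upper bound in P*. -/
open Set

noncomputable section

/-- A condition in the forcing `P*`: a function `η : λ → {-1, 1}` together with a
club `C` of `λ`. -/
structure PStar (lam : Ordinal) where
  η : Ordinal → ℤ
  C : Set Ordinal
  pm : ∀ α < lam, η α = 1 ∨ η α = -1
  club : IsClubIn C lam

/-- The order of `P*`: `p ≤ q` iff `C^q ⊆ C^p`, `η^q` agrees with `η^p` below `min C^p`,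
and for successive `α < β` in `C^p` and `γ ∈ [α,β)`, `η^q(γ) = (η^p(α)/η^q(α))·η^p(γ)`. -/
def PLe {lam : Ordinal} (p q : PStar lam) : Prop :=
  q.C ⊆ p.C ∧ (∀ γ < sInf p.C, q.η γ = p.η γ) ∧
  ∀ α ∈ p.C, ∀ γ ∈ Ico α (nextIn p.C α), q.η γ = (p.η α / q.η α) * p.η γ

private lemma pmS1 (a b c : ℤ) (ha : a = 1 ∨ a = -1) (hb : b = 1 ∨ b = -1) :
    (a / b * c) * b = c * a := by
  rcases ha with rfl | rfl <;> rcases hb with rfl | rfl <;> norm_num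

private lemma pmS2 (a b d c : ℤ) (ha : a = 1 ∨ a = -1) (hb : b = 1 ∨ b = -1)
    (hd : d = 1 ∨ d = -1) : (a / b * c) * d = a / (b * d) * c := by
  rcases ha with rfl | rfl <;> rcases hb with rfl | rfl <;> rcases hd with rfl | rfl <;> norm_num

private lemma pmMul {a b : ℤ} (ha : a = 1 ∨ a = -1) (hb : b = 1 ∨ b = -1) :
    a * b = 1 ∨ a * b = -1 := by
  rcases ha with rfl | rfl <;> rcases hb with rfl | rfl <;> norm_num

private lemma club_nonempty {C : Set Ordinal} {lam : Ordinal} (hC : IsClubIn C lam)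
    (hlam : 0 < lam) : C.Nonempty := by
  obtain ⟨d, hd, -⟩ := hC.2.1 0 hlam
  exact ⟨d, hd⟩

private lemma club_nextIn {C : Set Ordinal} {lam : Ordinal} (hC : IsClubIn C lam)
    {β : Ordinal} (hβ : β < lam) :
    nextIn C β ∈ C ∧ β < nextIn C β ∧ nextIn C β < lam := by
  obtain ⟨d, hd, hbd⟩ := hC.2.1 β hβ
  have hne : (C \ Iic β).Nonempty := ⟨d, hd, by simpa using hbd⟩
  have hmem := csInf_mem hne
  refine ⟨hmem.1, ?_, hC.1 hmem.1⟩
  exact not_le.1 hmem.2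

private lemma club_blockSup {C : Set Ordinal} {lam : Ordinal} (hC : IsClubIn C lam)
    {γ : Ordinal} (hγ : γ < lam) (hne : (C ∩ Iic γ).Nonempty) :
    sSup (C ∩ Iic γ) ∈ C ∩ Iic γ := by
  set β := sSup (C ∩ Iic γ) with hβdef
  have hbdd : BddAbove (C ∩ Iic γ) := ⟨γ, fun x hx => hx.2⟩
  have hβγ : β ≤ γ := csSup_le' (fun x hx => hx.2)
  by_cases hmem : β ∈ C
  · exact ⟨hmem, hβγ⟩
  · exfalso
    have hlt : ∀ x ∈ C ∩ Iic γ, x < β := fun x hx =>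
      lt_of_le_of_ne (le_csSup hbdd hx) (fun h => hmem (h ▸ hx.1))
    have hβ0 : β ≠ 0 := by
      obtain ⟨x, hx⟩ := hne
      intro h
      exact (fun h' => not_lt_zero h') (h ▸ hlt x hx)
    have hset : C ∩ Iio β = C ∩ Iic γ := by
      ext x
      exact ⟨fun hx => ⟨hx.1, le_trans hx.2.le hβγ⟩, fun hx => ⟨hx.1, hlt x hx⟩⟩
    exact hmem (hC.2.2 β (lt_of_le_of_lt hβγ hγ) hβ0 (by rw [hset]))
/-- `P*` is `(<λ)`-complete: every `≤`-increasing sequence of length `δ < λ` of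
conditions in `P*` has an upper bound. -/
theorem statement10 (κ : Cardinal.{0}) (hinacc : κ.IsInaccessible)
    (δ : Ordinal) (hδ : δ < κ.ord) (p : Ordinal → PStar κ.ord)
    (hmono : ∀ ξ ζ : Ordinal, ξ ≤ ζ → ζ < δ → PLe (p ξ) (p ζ)) :
    ∃ q : PStar κ.ord, ∀ ξ < δ, PLe (p ξ) q := by
  obtain ⟨hℵ0, hreg, -⟩ := id hinacc
  have hκlim : Order.IsSuccLimit κ.ord := Cardinal.isSuccLimit_ord hℵ0.le
  have hκ0 : (0 : Ordinal) < κ.ord := hκlim.pos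
  rcases eq_or_ne δ 0 with rfl | hδ0
  · refine ⟨⟨fun _ => 1, Iio κ.ord, fun _ _ => Or.inl rfl,
      fun x hx => hx,
      fun β hβ => ⟨Order.succ β, hκlim.succ_lt hβ, Order.lt_succ β⟩,
      fun β hβ _ _ => hβ⟩, fun ξ hξ => absurd hξ (fun h' => not_lt_zero h')⟩
  have hδpos : 0 < δ := pos_iff_ne_zero.2 hδ0
  have hδcard : δ.card < κ := Cardinal.lt_ord.1 hδ
  set Cq : Set Ordinal := {x | ∀ ξ < δ, x ∈ (p ξ).C} with hCqdef
  have hCqsub : Cq ⊆ Iio κ.ord := fun x hx => (p 0).club.1 (hx 0 hδpos)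
  have hCqclosed : ∀ β < κ.ord, β ≠ 0 → sSup (Cq ∩ Iio β) = β → β ∈ Cq := by
    intro β hβ hβ0 hsup ξ hξ
    apply (p ξ).club.2.2 β hβ hβ0
    have hne : (Cq ∩ Iio β).Nonempty := by
      by_contra h
      rw [not_nonempty_iff_eq_empty] at h
      rw [h, csSup_empty] at hsup
      exact hβ0 hsup.symm
    apply le_antisymm (csSup_le' fun x hx => hx.2.le)
    calc β = sSup (Cq ∩ Iio β) := hsup.symm
      _ ≤ sSup ((p ξ).C ∩ Iio β) :=
        csSup_le_csSup ⟨β, fun x hx => hx.2.le⟩ hne (fun x hx => ⟨hx.1 ξ hξ, hx.2⟩)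
  have hnext : ∀ x < κ.ord, ∀ ξ < δ,
      nextIn (p ξ).C x ∈ (p ξ).C ∧ x < nextIn (p ξ).C x ∧ nextIn (p ξ).C x < κ.ord :=
    fun x hx ξ _ => club_nextIn (p ξ).club hx
  have hCqunb : ∀ β < κ.ord, ∃ d ∈ Cq, β < d := by
    intro β hβ
    set F : Ordinal → Ordinal := fun x => Ordinal.bsup δ (fun ξ _ => nextIn (p ξ).C x) with hF
    have hFlt : ∀ x < κ.ord, F x < κ.ord := fun x hx =>
      Cardinal.bsup_lt_ord_of_isRegular hinacc.isRegular hδcard (fun ξ hξ => (hnext x hx ξ hξ).2.2)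
    have hFgt : ∀ x < κ.ord, x < F x := fun x hx =>
      lt_of_lt_of_le (hnext x hx 0 hδpos).2.1 (Ordinal.le_bsup _ 0 hδpos)
    set f : ℕ → Ordinal := fun n => F^[n] β with hfdef
    have hf0 : f 0 = β := rfl
    have hfS : ∀ n, f (n + 1) = F (f n) := fun n => Function.iterate_succ_apply' F n β
    have hflt : ∀ n, f n < κ.ord := by
      intro n
      induction n with
      | zero => exact hβ
      | succ n ih => rw [hfS]; exact hFlt _ ih
    have hfmono : ∀ n, f n < f (n + 1) := fun n => by rw [hfS]; exact hFgt _ (hflt n)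
    have hfB : ∀ n, f n ≤ iSup f := fun n => le_ciSup (Ordinal.bddAbove_range f) n
    have hBκ : iSup f < κ.ord :=
      Cardinal.iSup_lt_ord_of_isRegular hinacc.isRegular (by simpa using hℵ0) hflt
    have hβB : β < iSup f := by rw [← hf0]; exact lt_of_lt_of_le (hfmono 0) (hfB 1)
    refine ⟨iSup f, ?_, hβB⟩
    intro ξ hξ
    apply (p ξ).club.2.2 _ hBκ (fun h => (fun h' => not_lt_zero h') (h ▸ hβB))
    have hsub : ∀ n, nextIn (p ξ).C (f n) ∈ (p ξ).C ∩ Iio (iSup f) := by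
      intro n
      refine ⟨(hnext _ (hflt n) ξ hξ).1, ?_⟩
      calc nextIn (p ξ).C (f n) ≤ F (f n) := Ordinal.le_bsup _ ξ hξ
        _ = f (n + 1) := (hfS n).symm
        _ < f (n + 2) := hfmono (n + 1)
        _ ≤ iSup f := hfB (n + 2)
    apply le_antisymm (csSup_le' fun x hx => hx.2.le)
    refine ciSup_le fun n => ?_
    calc f n ≤ nextIn (p ξ).C (f n) := ((hnext _ (hflt n) ξ hξ).2.1).le
      _ ≤ sSup ((p ξ).C ∩ Iio (iSup f)) := le_csSup ⟨iSup f, fun x hx => hx.2.le⟩ (hsub n)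
  have hCq : IsClubIn Cq κ.ord := ⟨hCqsub, hCqunb, hCqclosed⟩
  have hCqne : Cq.Nonempty := club_nonempty hCq hκ0
  set μ := sInf Cq with hμdef
  have hμCq : μ ∈ Cq := csInf_mem hCqne
  have hμκ : μ < κ.ord := hCqsub hμCq
  -- descent lemma
  have hdesc : ∀ γ, γ < κ.ord → (∀ ξ < δ, ((p ξ).C ∩ Iic γ).Nonempty) →
      ∃ ξ, ξ < δ ∧ sSup ((p ξ).C ∩ Iic γ) ∈ Cq := by
    intro γ hγ hne
    by_contra hcon
    push_neg at hcon
    set m : Ordinal → Ordinal := fun ξ => sSup ((p ξ).C ∩ Iic γ) with hm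
    have hmmem : ∀ ξ < δ, m ξ ∈ (p ξ).C ∩ Iic γ := fun ξ hξ =>
      club_blockSup (p ξ).club hγ (hne ξ hξ)
    have hmanti : ∀ ξ ζ, ξ ≤ ζ → ζ < δ → m ζ ≤ m ξ := fun ξ ζ hle hζ =>
      csSup_le_csSup ⟨γ, fun x hx => hx.2⟩ (hne ζ hζ) (fun x hx => ⟨(hmono ξ ζ hle hζ).1 hx.1, hx.2⟩)
    have hg : ∀ ξ, ξ < δ → ∃ ζ, ζ < δ ∧ m ξ ∉ (p ζ).C := by
      intro ξ hξ
      by_contra h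
      push_neg at h
      exact hcon ξ hξ (fun ζ hζ => h ζ hζ)
    choose! g hg1 hg2 using hg
    obtain ⟨s, hs0, hsS⟩ : ∃ s : ℕ → Ordinal, s 0 = 0 ∧ ∀ n, s (n + 1) = max (s n) (g (s n)) :=
      ⟨fun n => Nat.rec 0 (fun _ x => max x (g x)) n, rfl, fun n => rfl⟩
    have hsδ : ∀ n, s n < δ := by
      intro n
      induction n with
      | zero => rw [hs0]; exact hδpos
      | succ n ih => rw [hsS]; exact max_lt ih (hg1 _ ih)
    have hdec : ∀ n, m (s (n + 1)) < m (s n) := by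
      intro n
      have h1 : m (s (n + 1)) ≤ m (s n) :=
        hmanti _ _ (by rw [hsS]; exact le_max_left _ _) (hsδ (n + 1))
      refine lt_of_le_of_ne h1 (fun h => hg2 (s n) (hsδ n) ?_)
      have hmem : m (s (n + 1)) ∈ (p (s (n + 1))).C := (hmmem _ (hsδ (n + 1))).1
      rw [h] at hmem
      exact (hmono (g (s n)) (s (n + 1))
        (by rw [hsS]; exact le_max_right _ _) (hsδ (n + 1))).1 hmem
    obtain ⟨x, ⟨n, rfl⟩, hmin⟩ :=
      Ordinal.lt_wf.has_min (Set.range fun n => m (s n)) ⟨_, ⟨0, rfl⟩⟩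
    exact hmin _ ⟨n + 1, rfl⟩ (hdec n)
  obtain ⟨A, hAdef⟩ : ∃ A : Ordinal → Ordinal, ∀ γ, A γ = sSup (Cq ∩ Iic γ) :=
    ⟨_, fun _ => rfl⟩
  have hAle : ∀ γ, A γ ≤ γ := by
    intro γ
    rw [hAdef]
    exact csSup_le' fun z hz => hz.2
  have hblock : ∀ γ, γ < κ.ord → μ ≤ γ →
      A γ ∈ Cq ∧ ∃ ξ, ξ < δ ∧ ∀ y ∈ (p ξ).C, y ≤ γ → y ≤ A γ := by
    intro γ hγ hμγ
    have hne : ∀ ξ < δ, ((p ξ).C ∩ Iic γ).Nonempty := fun ξ hξ => ⟨μ, hμCq ξ hξ, hμγ⟩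
    obtain ⟨ξ, hξδ, hx⟩ := hdesc γ hγ hne
    have hxm := club_blockSup (p ξ).club hγ (hne ξ hξδ)
    have hAx : A γ = sSup ((p ξ).C ∩ Iic γ) := by
      rw [hAdef]
      apply le_antisymm
      · exact csSup_le' (fun y hy => le_csSup ⟨γ, fun z hz => hz.2⟩ ⟨hy.1 ξ hξδ, hy.2⟩)
      · exact le_csSup ⟨γ, fun z hz => hz.2⟩ ⟨hx, hxm.2⟩
    refine ⟨by rw [hAx]; exact hx, ξ, hξδ, fun y hy hyγ => ?_⟩
    rw [hAx]
    exact le_csSup ⟨γ, fun z hz => hz.2⟩ ⟨hy, hyγ⟩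
  have hstab : ∀ γ, γ < κ.ord → ∃ v : ℤ, ∃ ξ, ξ < δ ∧ ∀ ζ, ξ ≤ ζ → ζ < δ →
      v = (if μ ≤ γ then (p ζ).η γ * (p ζ).η (A γ) else (p ζ).η γ) := by
    intro γ hγ
    by_cases hμγ : μ ≤ γ
    · obtain ⟨hACq, ξ, hξδ, hmax⟩ := hblock γ hγ hμγ
      have hAκ : A γ < κ.ord := lt_of_le_of_lt (hAle γ) hγ
      refine ⟨(p ξ).η γ * (p ξ).η (A γ), ξ, hξδ, fun ζ hζ1 hζ2 => ?_⟩
      rw [if_pos hμγ]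
      have hnx := club_nextIn (p ξ).club hAκ
      have hIco : γ ∈ Ico (A γ) (nextIn (p ξ).C (A γ)) := by
        refine ⟨hAle γ, ?_⟩
        by_contra h
        push_neg at h
        exact absurd (hmax _ hnx.1 h) (not_le.2 hnx.2.1)
      have hmζ := (hmono ξ ζ hζ1 hζ2).2.2 (A γ) (hACq ξ hξδ) γ hIco
      rw [hmζ, pmS1 _ _ _ ((p ξ).pm _ hAκ) ((p ζ).pm _ hAκ)]
    · have hlt : ∃ ξ, ξ < δ ∧ γ < sInf (p ξ).C := by
        by_contra h
        push_neg at h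
        have hne : ∀ ξ < δ, ((p ξ).C ∩ Iic γ).Nonempty := fun ξ hξ =>
          ⟨sInf (p ξ).C, csInf_mem (club_nonempty (p ξ).club hκ0), h ξ hξ⟩
        obtain ⟨ξ, hξδ, hx⟩ := hdesc γ hγ hne
        have hxm := club_blockSup (p ξ).club hγ (hne ξ hξδ)
        exact hμγ (le_trans (csInf_le' hx) hxm.2)
      obtain ⟨ξ, hξδ, hγξ⟩ := hlt
      refine ⟨(p ξ).η γ, ξ, hξδ, fun ζ hζ1 hζ2 => ?_⟩
      rw [if_neg hμγ]
      exact ((hmono ξ ζ hζ1 hζ2).2.1 γ hγξ).symm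
  choose! v hv using hstab
  have hpm : ∀ γ < κ.ord, v γ = 1 ∨ v γ = -1 := by
    intro γ hγ
    obtain ⟨ξ, hξδ, h⟩ := hv γ hγ
    rw [h ξ le_rfl hξδ]
    split_ifs with hμγ
    · exact pmMul ((p ξ).pm _ hγ) ((p ξ).pm _ (lt_of_le_of_lt (hAle γ) hγ))
    · exact (p ξ).pm _ hγ
  refine ⟨⟨v, Cq, hpm, hCq⟩, ?_⟩
  intro ξ hξδ
  refine ⟨fun x hx => hx ξ hξδ, ?_, ?_⟩
  · intro γ hγ
    have hsκ : sInf (p ξ).C < κ.ord :=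
      (p ξ).club.1 (csInf_mem (club_nonempty (p ξ).club hκ0))
    have hγκ : γ < κ.ord := lt_trans hγ hsκ
    have hγμ : ¬ μ ≤ γ :=
      fun h => not_lt.2 h (lt_of_lt_of_le hγ (csInf_le' (hμCq ξ hξδ)))
    obtain ⟨ξγ, hξγδ, hval⟩ := hv γ hγκ
    have hζδ : max ξ ξγ < δ := max_lt hξδ hξγδ
    show v γ = (p ξ).η γ
    rw [hval (max ξ ξγ) (le_max_right _ _) hζδ, if_neg hγμ]
    exact (hmono ξ (max ξ ξγ) (le_max_left _ _) hζδ).2.1 γ hγ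
  · intro α' hα' γ hγIco
    obtain ⟨hαγ, hγnext⟩ := hγIco
    have hα'κ : α' < κ.ord := (p ξ).club.1 hα'
    have hnx := club_nextIn (p ξ).club hα'κ
    have hγκ : γ < κ.ord := lt_trans hγnext hnx.2.2
    have hempt : ∀ y ∈ (p ξ).C, y ≤ γ → y ≤ α' := by
      intro y hy hyγ
      by_contra h
      push_neg at h
      have hle : nextIn (p ξ).C α' ≤ y := csInf_le' ⟨hy, by simpa using h⟩
      exact absurd (lt_of_lt_of_le hγnext hle) (not_lt.2 hyγ)
    obtain ⟨ξγ, hξγδ, hvγ⟩ := hv γ hγκ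
    obtain ⟨ξα, hξαδ, hvα⟩ := hv α' hα'κ
    have hζδ : max ξ (max ξγ ξα) < δ := max_lt hξδ (max_lt hξγδ hξαδ)
    have hmζ := (hmono ξ (max ξ (max ξγ ξα)) (le_max_left _ _) hζδ).2.2 α' hα' γ ⟨hαγ, hγnext⟩
    show v γ = (p ξ).η α' / v α' * (p ξ).η γ
    by_cases hμγ : μ ≤ γ
    · have hμα : μ ≤ α' := hempt μ (hμCq ξ hξδ) hμγ
      have hAeq : A α' = A γ := by
        have hseteq : Cq ∩ Iic α' = Cq ∩ Iic γ := by
          ext x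
          exact ⟨fun hx => ⟨hx.1, le_trans hx.2 hαγ⟩,
            fun hx => ⟨hx.1, hempt x (hx.1 ξ hξδ) hx.2⟩⟩
        rw [hAdef, hAdef, hseteq]
      rw [hvγ (max ξ (max ξγ ξα)) (le_trans (le_max_left _ _) (le_max_right _ _)) hζδ,
        if_pos hμγ,
        hvα (max ξ (max ξγ ξα)) (le_trans (le_max_right _ _) (le_max_right _ _)) hζδ,
        if_pos hμα, hAeq, hmζ]
      exact pmS2 _ _ _ _ ((p ξ).pm _ hα'κ) ((p (max ξ (max ξγ ξα))).pm _ hα'κ)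
        ((p (max ξ (max ξγ ξα))).pm _ (lt_of_le_of_lt (hAle γ) hγκ))
    · have hμα : ¬ μ ≤ α' := fun h => hμγ (le_trans h hαγ)
      rw [hvγ (max ξ (max ξγ ξα)) (le_trans (le_max_left _ _) (le_max_right _ _)) hζδ,
        if_neg hμγ,
        hvα (max ξ (max ξγ ξα)) (le_trans (le_max_right _ _) (le_max_right _ _)) hζδ,
        if_neg hμα]
      exact hmζ
end
end
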